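/- arXiv:2001.09188 — 7 statements merged into one kernel-verified Lean document; each statement's English description precedes it below -/
import Mathlib

section
/- For every measurable set A ⊆ X, ∑_{k=1}^N ∫_{X^N} (∏_{i=1}^N q(xⁱ)) · (w(x^k)/∑_{j=1}^N w(x^j)) · (Ẑ(x)/Z̄_k(x)) · 1_A(x^k) dμ^{⊗N}(x) = (∫_A π dμ) · ∑_{k=1}^N ∫_{X^N} (∏_{i=1}^N q(xⁱ)) · (w(x^k)/∑_{j=1}^N w(x^j)) · (Ẑ(x)/Z̄_k(x)) dμ^{⊗N}(x); that is, the normalized marginal distribution of the accepted sample X = x^K in Ensemble Rejection Sampling equals π. -/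
open MeasureTheory Finset

noncomputable section

/-- The ensemble estimate `Ẑ(x) = N⁻¹ ∑ᵢ w(xⁱ)`. -/
def ersZhat {X : Type*} (N : ℕ) (w : X → ℝ) (x : Fin N → X) : ℝ :=
  (N : ℝ)⁻¹ * ∑ i, w (x i)

/-- The upper bound `Z̄ₖ(x) = Ẑ(x) + N⁻¹ (w̄ - w(x^k))`. -/
def ersZbar {X : Type*} (N : ℕ) (w : X → ℝ) (wbar : ℝ) (k : Fin N) (x : Fin N → X) : ℝ :=
  ersZhat N w x + (N : ℝ)⁻¹ * (wbar - w (x k))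

/-- Factorization of one term of the ERS marginal: integrating out the `k`-th coordinate. -/
lemma ers_key {X : Type*} [MeasurableSpace X] (μ : Measure X) [SigmaFinite μ]
    (q w : X → ℝ) (hwnn : ∀ x, 0 ≤ w x)
    (wbar : ℝ) (m : ℕ) (k : Fin (m + 1)) (g : X → ℝ) :
    ∫ x : Fin (m + 1) → X,
        (∏ i, q (x i)) * (w (x k) / ∑ j, w (x j)) *
          (ersZhat (m + 1) w x / ersZbar (m + 1) w wbar k x) * g (x k)
        ∂(Measure.pi fun _ : Fin (m + 1) => μ)
    = (∫ a, q a * w a * g a ∂μ) *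
      ∫ y : Fin m → X, (∏ i, q (y i)) / (wbar + ∑ j, w (y j))
        ∂(Measure.pi fun _ : Fin m => μ) := by
  have hMP := (measurePreserving_piFinSuccAbove (fun _ : Fin (m + 1) => μ) k).symm
  rw [← hMP.integral_comp (MeasurableEquiv.measurableEmbedding _)]
  have hptwise : ∀ z : X × (Fin m → X),
      (fun x : Fin (m + 1) → X =>
        (∏ i, q (x i)) * (w (x k) / ∑ j, w (x j)) *
          (ersZhat (m + 1) w x / ersZbar (m + 1) w wbar k x) * g (x k))
        ((MeasurableEquiv.piFinSuccAbove (fun _ : Fin (m + 1) => X) k).symm z)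
      = (q z.1 * w z.1 * g z.1) *
        ((∏ i, q (z.2 i)) / (wbar + ∑ j, w (z.2 j))) := by
    rintro ⟨a, y⟩
    simp only [MeasurableEquiv.piFinSuccAbove_symm_apply, Fin.insertNthEquiv,
      Equiv.coe_fn_mk, Fin.insertNth_apply_same]
    set x : Fin (m + 1) → X := Fin.insertNth k a y with hx
    have hxk : x k = a := by rw [hx]; simp
    have hxs : ∀ j, x (k.succAbove j) = y j := fun j => by rw [hx]; simp
    have hprod : (∏ i, q (x i)) = q a * ∏ i, q (y i) := by
      rw [Fin.prod_univ_succAbove (fun i => q (x i)) k, hxk]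
      congr 1
      exact Finset.prod_congr rfl fun j _ => by rw [hxs]
    have hsum : (∑ j, w (x j)) = w a + ∑ j, w (y j) := by
      rw [Fin.sum_univ_succAbove (fun i => w (x i)) k, hxk]
      congr 1
      exact Finset.sum_congr rfl fun j _ => by rw [hxs]
    set S : ℝ := ∑ j, w (y j) with hS
    have hSnn : 0 ≤ S := Finset.sum_nonneg fun j _ => hwnn _
    have hNne : ((m : ℝ) + 1)⁻¹ ≠ 0 := by positivity
    have hzhat : ersZhat (m + 1) w x = ((m : ℝ) + 1)⁻¹ * (w a + S) := by
      rw [ersZhat, hsum]; push_cast; ring_nf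
    have hzbar : ersZbar (m + 1) w wbar k x = ((m : ℝ) + 1)⁻¹ * (wbar + S) := by
      rw [ersZbar, hzhat, hxk]; push_cast; ring_nf
    rw [hprod, hsum, hzhat, hzbar]
    rw [mul_div_mul_left _ _ hNne]
    rcases eq_or_ne (w a + S) 0 with h0 | h0
    · have hwa : w a = 0 := by
        have := hwnn a
        nlinarith [hSnn]
      rw [h0, hwa]
      simp
    · field_simp
  simp_rw [hptwise]
  exact integral_prod_mul (μ := μ) (ν := Measure.pi fun _ : Fin m => μ)
    (fun a => q a * w a * g a) (fun y => (∏ i, q (y i)) / (wbar + ∑ j, w (y j)))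

/-- The normalized marginal distribution of the accepted sample of
static Ensemble Rejection Sampling equals `π = γ/Z`. -/
theorem ers_static_exactness
    {X : Type*} [MeasurableSpace X] (μ : Measure X) [SigmaFinite μ]
    (γ q : X → ℝ) (hγm : Measurable γ) (hqm : Measurable q)
    (hγnn : ∀ x, 0 ≤ γ x) (hqnn : ∀ x, 0 ≤ q x)
    (hqprob : ∫ x, q x ∂μ = 1)
    (hnull : μ {x | 0 < γ x ∧ q x = 0} = 0)
    (Z : ℝ) (hZ : Z = ∫ x, γ x ∂μ) (hZpos : 0 < Z) (hγint : Integrable γ μ)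
    (w : X → ℝ) (hw : ∀ x, w x = γ x / q x)
    (wbar : ℝ) (hwbound : ∀ᵐ x ∂μ, 0 < q x → 0 < w x ∧ w x ≤ wbar)
    (N : ℕ) (hN : 1 ≤ N)
    (A : Set X) (hA : MeasurableSet A) :
    ∑ k : Fin N, ∫ x : Fin N → X,
        (∏ i, q (x i)) * (w (x k) / ∑ j, w (x j)) *
          (ersZhat N w x / ersZbar N w wbar k x) * A.indicator (1 : X → ℝ) (x k)
        ∂(Measure.pi fun _ : Fin N => μ)
    = (∫ a in A, γ a / Z ∂μ) *
      ∑ k : Fin N, ∫ x : Fin N → X,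
        (∏ i, q (x i)) * (w (x k) / ∑ j, w (x j)) *
          (ersZhat N w x / ersZbar N w wbar k x)
        ∂(Measure.pi fun _ : Fin N => μ) := by
  obtain ⟨m, rfl⟩ : ∃ m, N = m + 1 := ⟨N - 1, (Nat.succ_pred_eq_of_pos hN).symm⟩
  have hwnn : ∀ x, 0 ≤ w x := fun x => by rw [hw]; exact div_nonneg (hγnn x) (hqnn x)
  -- the a.e. identity q·w = γ
  have hae : ∀ᵐ a ∂μ, q a * w a = γ a := by
    have h1 : ∀ᵐ a ∂μ, ¬(0 < γ a ∧ q a = 0) := by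
      rw [ae_iff]; simpa using hnull
    filter_upwards [h1] with a ha
    rcases eq_or_ne (q a) 0 with hq0 | hq0
    · have hγ0 : γ a = 0 := by
        by_contra h
        exact ha ⟨lt_of_le_of_ne (hγnn a) (Ne.symm h), hq0⟩
      rw [hw, hq0, hγ0]; simp
    · rw [hw, mul_div_cancel₀ _ hq0]
  -- the two one-dimensional integrals
  have hind : (∫ a, q a * w a * A.indicator (1 : X → ℝ) a ∂μ) = ∫ a in A, γ a ∂μ := by
    rw [← integral_indicator hA]
    refine integral_congr_ae ?_
    filter_upwards [hae] with a ha
    rw [ha]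
    by_cases haA : a ∈ A <;> simp [Set.indicator_apply, haA]
  have hone : (∫ a, q a * w a ∂μ) = Z := by
    rw [hZ]
    exact integral_congr_ae hae
  -- apply the key factorization with g = indicator and g = 1
  have hL : ∀ k : Fin (m + 1),
      (∫ x : Fin (m + 1) → X,
        (∏ i, q (x i)) * (w (x k) / ∑ j, w (x j)) *
          (ersZhat (m + 1) w x / ersZbar (m + 1) w wbar k x) * A.indicator (1 : X → ℝ) (x k)
        ∂(Measure.pi fun _ : Fin (m + 1) => μ))
      = (∫ a in A, γ a ∂μ) *
        ∫ y : Fin m → X, (∏ i, q (y i)) / (wbar + ∑ j, w (y j))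
          ∂(Measure.pi fun _ : Fin m => μ) := fun k => by
    rw [ers_key μ q w hwnn wbar m k (A.indicator (1 : X → ℝ)), hind]
  have hR : ∀ k : Fin (m + 1),
      (∫ x : Fin (m + 1) → X,
        (∏ i, q (x i)) * (w (x k) / ∑ j, w (x j)) *
          (ersZhat (m + 1) w x / ersZbar (m + 1) w wbar k x)
        ∂(Measure.pi fun _ : Fin (m + 1) => μ))
      = Z * ∫ y : Fin m → X, (∏ i, q (y i)) / (wbar + ∑ j, w (y j))
          ∂(Measure.pi fun _ : Fin m => μ) := fun k => by
    have := ers_key μ q w hwnn wbar m k (fun _ => (1 : ℝ))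
    simp only [mul_one] at this ⊢
    rw [this, hone]
  simp_rw [hL, hR]
  rw [Finset.sum_const, Finset.sum_const]
  have hdiv : (∫ a in A, γ a / Z ∂μ) = (∫ a in A, γ a ∂μ) / Z := by
    rw [integral_div]
  rw [hdiv]
  field_simp
  ring
end
end

section
/- The average acceptance probability of Ensemble Rejection Sampling, p_ERS := ∑_{k=1}^N ∫_{X^N} (∏_{i=1}^N q(xⁱ)) · (w(x^k)/∑_{j=1}^N w(x^j)) · (Ẑ(x)/Z̄_k(x)) dμ^{⊗N}(x), satisfies p_ERS ≥ N·p_RS/(1 + (N−1)·p_RS), where p_RS := Z/w̄ is the average acceptance probability of standard rejection sampling. -/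
open MeasureTheory Finset

noncomputable section

/-- Auxiliary: product-form Fubini for `Measure.pi` with an explicit measure. -/
lemma ers_integral_pi_prod {X : Type*} [MeasurableSpace X] (μ : Measure X) [SigmaFinite μ]
    {n : ℕ} (f : Fin n → X → ℝ) :
    ∫ z : Fin n → X, ∏ i, f i (z i) ∂(Measure.pi fun _ => μ) = ∏ i, ∫ x, f i x ∂μ := by
  letI : MeasureSpace X := ⟨μ⟩
  haveI : SigmaFinite (volume : Measure X) := ‹SigmaFinite μ›
  exact MeasureTheory.integral_fin_nat_prod_eq_prod f

/-- Auxiliary: integrability of products over `Measure.pi` with an explicit measure. -/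
lemma ers_integrable_pi_prod {X : Type*} [MeasurableSpace X] (μ : Measure X) [SigmaFinite μ]
    {n : ℕ} (f : Fin n → X → ℝ) (hf : ∀ i, Integrable (f i) μ) :
    Integrable (fun z : Fin n → X => ∏ i, f i (z i)) (Measure.pi fun _ => μ) := by
  letI : MeasureSpace X := ⟨μ⟩
  haveI : SigmaFinite (volume : Measure X) := ‹SigmaFinite μ›
  exact MeasureTheory.Integrable.fin_nat_prod hf

/-- Auxiliary: the tangent-line inequality for the convex function `1/·`. -/
lemma ers_tangent_ineq {a b : ℝ} (ha : 0 < a) (hb : 0 < b) : (2*a - b)/a^2 ≤ 1/b := by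
  rw [div_le_div_iff₀ (by positivity) hb]
  nlinarith [sq_nonneg (a - b)]

/-- Auxiliary: pointwise simplification of the ERS acceptance integrand. -/
lemma ers_integrand_eq {X : Type*} (n : ℕ) (w : X → ℝ) (hwnn : ∀ x, 0 ≤ w x) (wbar : ℝ)
    (k : Fin (n+1)) (x : Fin (n+1) → X) :
    (w (x k) / ∑ j, w (x j)) * (ersZhat (n+1) w x / ersZbar (n+1) w wbar k x)
      = w (x k) / ((∑ j, w (x j)) - w (x k) + wbar) := by
  set S := ∑ j, w (x j) with hS
  have hNr : ((n+1 : ℕ) : ℝ)⁻¹ ≠ 0 := by positivity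
  have hbar : ersZbar (n+1) w wbar k x = ((n+1 : ℕ) : ℝ)⁻¹ * (S - w (x k) + wbar) := by
    simp only [ersZbar, ersZhat]; push_cast; ring
  have hratio : ersZhat (n+1) w x / ersZbar (n+1) w wbar k x = S / (S - w (x k) + wbar) := by
    rw [hbar, ersZhat, ← hS, mul_div_mul_left _ _ hNr]
  rw [hratio]
  rcases eq_or_ne S 0 with h0 | h0
  · have : w (x k) = 0 := by
      have hle : w (x k) ≤ S := Finset.single_le_sum (fun j _ => hwnn (x j)) (mem_univ k)
      have := hwnn (x k); linarith
    simp [this]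
  · rw [div_mul_div_comm, mul_comm S ((S - w (x k) + wbar)), mul_div_mul_right _ _ h0]

/-- Auxiliary: the per-coordinate factorization of each ERS summand. -/
lemma ers_summand_eq {X : Type*} [MeasurableSpace X] (μ : Measure X) [SigmaFinite μ]
    (q w : X → ℝ) (wbar : ℝ) (n : ℕ) (k : Fin (n+1)) :
    ∫ x : Fin (n+1) → X, (∏ i, q (x i)) * (w (x k) / ((∑ j, w (x j)) - w (x k) + wbar))
        ∂(Measure.pi fun _ => μ)
      = (∫ y, q y * w y ∂μ) *
        ∫ z : Fin n → X, (∏ i, q (z i)) / ((∑ j, w (z j)) + wbar) ∂(Measure.pi fun _ => μ) := by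
  have hmp := (measurePreserving_piFinSuccAbove (fun _ : Fin (n+1) => μ) k).symm
  rw [← hmp.integral_comp']
  have heq : ∀ p : X × (Fin n → X),
      (fun x : Fin (n+1) → X => (∏ i, q (x i)) * (w (x k) / ((∑ j, w (x j)) - w (x k) + wbar)))
        ((MeasurableEquiv.piFinSuccAbove (fun _ => X) k).symm p)
      = (q p.1 * w p.1) * ((∏ i, q (p.2 i)) / ((∑ j, w (p.2 j)) + wbar)) := by
    rintro ⟨y, z⟩
    simp only [MeasurableEquiv.piFinSuccAbove_symm_apply, Fin.insertNthEquiv, Equiv.coe_fn_mk]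
    rw [Fin.prod_univ_succAbove _ k, Fin.sum_univ_succAbove _ k]
    simp only [Fin.insertNth_apply_same, Fin.insertNth_apply_succAbove]
    have : w y + (∑ j, w (z j)) - w y + wbar = (∑ j, w (z j)) + wbar := by ring
    rw [this]; ring
  rw [show (fun p : X × (Fin n → X) =>
      (fun x : Fin (n+1) → X => (∏ i, q (x i)) * (w (x k) / ((∑ j, w (x j)) - w (x k) + wbar)))
        ((MeasurableEquiv.piFinSuccAbove (fun _ => X) k).symm p))
    = fun p : X × (Fin n → X) => (q p.1 * w p.1) * ((∏ i, q (p.2 i)) / ((∑ j, w (p.2 j)) + wbar))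
    from funext heq]
  exact integral_prod_mul (L := ℝ) (fun y => q y * w y)
    (fun z : Fin n → X => (∏ i, q (z i)) / ((∑ j, w (z j)) + wbar))

/-- The average acceptance probability of static Ensemble Rejection
Sampling satisfies `p_ERS ≥ N p_RS / (1 + (N-1) p_RS)` with `p_RS = Z/w̄`. -/
theorem ers_static_acceptance_bound
    {X : Type*} [MeasurableSpace X] (μ : Measure X) [SigmaFinite μ]
    (γ q : X → ℝ) (hγm : Measurable γ) (hqm : Measurable q)
    (hγnn : ∀ x, 0 ≤ γ x) (hqnn : ∀ x, 0 ≤ q x)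
    (hqprob : ∫ x, q x ∂μ = 1)
    (hnull : μ {x | 0 < γ x ∧ q x = 0} = 0)
    (Z : ℝ) (hZ : Z = ∫ x, γ x ∂μ) (hZpos : 0 < Z) (hγint : Integrable γ μ)
    (w : X → ℝ) (hw : ∀ x, w x = γ x / q x)
    (wbar : ℝ) (hwbound : ∀ᵐ x ∂μ, 0 < q x → 0 < w x ∧ w x ≤ wbar)
    (N : ℕ) (hN : 1 ≤ N) :
    ∑ k : Fin N, ∫ x : Fin N → X,
        (∏ i, q (x i)) * (w (x k) / ∑ j, w (x j)) *
          (ersZhat N w x / ersZbar N w wbar k x)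
        ∂(Measure.pi fun _ : Fin N => μ)
    ≥ (N : ℝ) * (Z / wbar) / (1 + ((N : ℝ) - 1) * (Z / wbar)) := by
  obtain ⟨n, rfl⟩ : ∃ n, N = n + 1 := ⟨N - 1, (Nat.succ_pred_eq_of_pos hN).symm⟩
  -- basic facts
  have hqint : Integrable q μ := by
    by_contra h; rw [integral_undef h] at hqprob; norm_num at hqprob
  have hwnn : ∀ x, 0 ≤ w x := fun x => (hw x) ▸ div_nonneg (hγnn x) (hqnn x)
  have hwm : Measurable w := (funext hw : w = fun x => γ x / q x) ▸ hγm.div hqm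
  have hae : ∀ᵐ x ∂μ, ¬(0 < γ x ∧ q x = 0) := by
    rw [ae_iff]; simpa using hnull
  have hqw : (fun x => q x * w x) =ᵐ[μ] γ := by
    filter_upwards [hae] with x hx
    rcases eq_or_ne (q x) 0 with h0 | h0
    · have hγ0 : γ x = 0 := by
        by_contra hg; exact hx ⟨lt_of_le_of_ne (hγnn x) (Ne.symm hg), h0⟩
      simp [h0, hγ0]
    · rw [hw]; field_simp
  have hqwint : Integrable (fun x => q x * w x) μ := hγint.congr hqw.symm
  have hqwZ : ∫ x, q x * w x ∂μ = Z := by rw [integral_congr_ae hqw, hZ]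
  -- positivity of wbar
  have hwbar : 0 < wbar := by
    have hqne : μ {x | 0 < q x} ≠ 0 := by
      intro h
      have hq0 : q =ᵐ[μ] 0 := by
        rw [Filter.EventuallyEq, ae_iff]
        refine measure_mono_null (fun x hx => ?_) h
        simp only [Set.mem_setOf_eq, Pi.zero_apply] at hx ⊢
        exact lt_of_le_of_ne (hqnn x) (Ne.symm hx)
      rw [integral_congr_ae hq0] at hqprob
      simp at hqprob
    have hfreq : ∃ᶠ x in ae μ, 0 < q x := by
      rw [Filter.Frequently]
      intro hcon
      rw [ae_iff] at hcon
      simp only [not_not] at hcon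
      exact hqne (by simpa using hcon)
    obtain ⟨x₀, hx1, hx2⟩ := (hfreq.and_eventually hwbound).exists
    exact lt_of_lt_of_le (hx2 hx1).1 (hx2 hx1).2
  -- notation
  set P : (Fin n → X) → ℝ := fun z => ∏ i, q (z i) with hP
  set T : (Fin n → X) → ℝ := fun z => ∑ j, w (z j) with hT
  set a : ℝ := wbar + (n : ℝ) * Z with ha
  have hapos : 0 < a := by positivity
  set I : ℝ := ∫ z : Fin n → X, P z / (T z + wbar) ∂(Measure.pi fun _ => μ) with hI
  -- each summand equals Z * I
  have key : ∀ k : Fin (n+1),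
      ∫ x : Fin (n+1) → X, (∏ i, q (x i)) * (w (x k) / ∑ j, w (x j)) *
          (ersZhat (n+1) w x / ersZbar (n+1) w wbar k x) ∂(Measure.pi fun _ => μ)
        = Z * I := by
    intro k
    have hrw : (fun x : Fin (n+1) → X => (∏ i, q (x i)) * (w (x k) / ∑ j, w (x j)) *
          (ersZhat (n+1) w x / ersZbar (n+1) w wbar k x))
        = fun x : Fin (n+1) → X =>
          (∏ i, q (x i)) * (w (x k) / ((∑ j, w (x j)) - w (x k) + wbar)) := by
      funext x
      rw [mul_assoc, ers_integrand_eq n w hwnn wbar k x]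
    rw [hrw, ers_summand_eq μ q w wbar n k, hqwZ]
  -- integrability and integrals of building blocks
  have hPnn : ∀ z, 0 ≤ P z := fun z => Finset.prod_nonneg fun i _ => hqnn (z i)
  have hTnn : ∀ z, 0 ≤ T z := fun z => Finset.sum_nonneg fun j _ => hwnn (z j)
  have hPint : Integrable P (Measure.pi fun _ => μ) :=
    ers_integrable_pi_prod μ (fun _ => q) (fun _ => hqint)
  have hPone : ∫ z : Fin n → X, P z ∂(Measure.pi fun _ => μ) = 1 := by
    rw [hP]
    rw [ers_integral_pi_prod μ (fun _ => q)]
    simp [hqprob]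
  -- products with one w factor
  have hflem : ∀ j : Fin n, ∀ z : Fin n → X,
      (∏ i, (fun x => q x * (if i = j then w x else 1)) (z i)) = P z * w (z j) := by
    intro j z
    rw [Finset.prod_mul_distrib]
    congr 1
    rw [Finset.prod_ite_eq' Finset.univ j (fun i => w (z i))]
    simp
  have hfint : ∀ j : Fin n, ∀ i : Fin n,
      Integrable (fun x => q x * (if i = j then w x else 1)) μ := by
    intro j i
    by_cases h : i = j <;> simp [h, hqwint, hqint]
  have hPwint : ∀ j : Fin n, Integrable (fun z : Fin n → X => P z * w (z j))
      (Measure.pi fun _ => μ) := by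
    intro j
    have := ers_integrable_pi_prod μ (fun i => fun x => q x * (if i = j then w x else 1))
      (hfint j)
    refine this.congr (Filter.Eventually.of_forall fun z => ?_)
    exact hflem j z
  have hPwZ : ∀ j : Fin n, ∫ z : Fin n → X, P z * w (z j) ∂(Measure.pi fun _ => μ) = Z := by
    intro j
    have h1 : ∫ z : Fin n → X, P z * w (z j) ∂(Measure.pi fun _ => μ)
        = ∫ z : Fin n → X, ∏ i, (fun x => q x * (if i = j then w x else 1)) (z i)
            ∂(Measure.pi fun _ => μ) := by
      refine integral_congr_ae (Filter.Eventually.of_forall fun z => ?_)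
      exact (hflem j z).symm
    rw [h1, ers_integral_pi_prod μ (fun i => fun x => q x * (if i = j then w x else 1))]
    have h2 : ∀ i : Fin n, ∫ x, q x * (if i = j then w x else 1) ∂μ
        = if i = j then Z else 1 := by
      intro i
      by_cases h : i = j <;> simp [h, hqwZ, hqprob]
    rw [Finset.prod_congr rfl (fun i _ => h2 i), Finset.prod_ite_eq' Finset.univ j fun _ => Z]
    simp
  have hTPint : Integrable (fun z : Fin n → X => T z * P z) (Measure.pi fun _ => μ) := by
    have : (fun z : Fin n → X => T z * P z) = fun z => ∑ j, P z * w (z j) := by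
      funext z; rw [hT]; simp only []
      rw [Finset.sum_mul]; exact Finset.sum_congr rfl fun j _ => mul_comm _ _
    rw [this]
    exact integrable_finset_sum _ fun j _ => hPwint j
  have hTPZ : ∫ z : Fin n → X, T z * P z ∂(Measure.pi fun _ => μ) = (n : ℝ) * Z := by
    have h0 : (fun z : Fin n → X => T z * P z) = fun z => ∑ j, P z * w (z j) := by
      funext z; rw [hT]; simp only []
      rw [Finset.sum_mul]; exact Finset.sum_congr rfl fun j _ => mul_comm _ _
    rw [h0, integral_finset_sum _ fun j _ => hPwint j]
    simp only [hPwZ]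
    simp [Finset.card_univ, mul_comm]
  -- measurability of the main integrand over the product space
  have hPm : Measurable P := Finset.measurable_prod _ fun i _ => hqm.comp (measurable_pi_apply i)
  have hTm : Measurable T := Finset.measurable_sum _ fun j _ => hwm.comp (measurable_pi_apply j)
  have hGm : Measurable fun z : Fin n → X => P z / (T z + wbar) :=
    hPm.div (hTm.add_const wbar)
  have hGint : Integrable (fun z : Fin n → X => P z / (T z + wbar))
      (Measure.pi fun _ => μ) := by
    refine Integrable.mono' (hPint.div_const wbar) hGm.aestronglyMeasurable
      (Filter.Eventually.of_forall fun z => ?_)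
    have hb : 0 < T z + wbar := by have := hTnn z; linarith
    rw [Real.norm_eq_abs, abs_of_nonneg (div_nonneg (hPnn z) hb.le)]
    gcongr
    · exact hPnn z
    · linarith [hTnn z]
  -- Jensen-type lower bound on I
  have hIbound : 1 / a ≤ I := by
    have hH : ∀ z : Fin n → X,
        (2*a - wbar)/a^2 * P z - (T z * P z)/a^2 ≤ P z / (T z + wbar) := by
      intro z
      have hb : 0 < T z + wbar := by have := hTnn z; linarith
      have h1 : (2*a - (T z + wbar))/a^2 ≤ 1/(T z + wbar) := ers_tangent_ineq hapos hb
      have h2 : P z * ((2*a - (T z + wbar))/a^2) ≤ P z * (1/(T z + wbar)) :=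
        mul_le_mul_of_nonneg_left h1 (hPnn z)
      calc (2*a - wbar)/a^2 * P z - (T z * P z)/a^2
          = P z * ((2*a - (T z + wbar))/a^2) := by ring
        _ ≤ P z * (1/(T z + wbar)) := h2
        _ = P z / (T z + wbar) := by ring
    have hHint : Integrable (fun z : Fin n → X =>
        (2*a - wbar)/a^2 * P z - (T z * P z)/a^2) (Measure.pi fun _ => μ) :=
      (hPint.const_mul _).sub (hTPint.div_const _)
    have hle : ∫ z : Fin n → X, ((2*a - wbar)/a^2 * P z - (T z * P z)/a^2)
          ∂(Measure.pi fun _ => μ) ≤ I :=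
      integral_mono hHint hGint hH
    have hcalc : ∫ z : Fin n → X, ((2*a - wbar)/a^2 * P z - (T z * P z)/a^2)
          ∂(Measure.pi fun _ => μ) = 1 / a := by
      rw [integral_sub (hPint.const_mul _) (hTPint.div_const _), integral_const_mul,
        integral_div, hPone, hTPZ]
      have hane : a ≠ 0 := ne_of_gt hapos
      field_simp
      rw [ha]; ring
    linarith
  -- conclude
  have hsum : ∑ k : Fin (n+1), ∫ x : Fin (n+1) → X,
        (∏ i, q (x i)) * (w (x k) / ∑ j, w (x j)) *
          (ersZhat (n+1) w x / ersZbar (n+1) w wbar k x) ∂(Measure.pi fun _ => μ)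
      = ((n : ℝ) + 1) * (Z * I) := by
    rw [Finset.sum_congr rfl fun k _ => key k]
    simp [Finset.card_univ, mul_comm]
  rw [ge_iff_le, hsum]
  have hrhs : ((n+1 : ℕ) : ℝ) * (Z / wbar) / (1 + (((n+1 : ℕ) : ℝ) - 1) * (Z / wbar))
      = ((n : ℝ) + 1) * Z / a := by
    have hwne : wbar ≠ 0 := ne_of_gt hwbar
    have hane : a ≠ 0 := ne_of_gt hapos
    have hden : 1 + (((n+1 : ℕ) : ℝ) - 1) * (Z / wbar) = a / wbar := by
      push_cast; rw [ha]; field_simp; ring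
    rw [hden]
    push_cast
    field_simp
  rw [hrhs]
  have heq1 : ((n : ℝ) + 1) * Z / a = ((n : ℝ) + 1) * (Z * (1/a)) := by ring
  rw [heq1]
  have h2 : Z * (1/a) ≤ Z * I := mul_le_mul_of_nonneg_left hIbound hZpos.le
  exact mul_le_mul_of_nonneg_left h2 (by positivity)
end
end

section
/- The identity ∑_{k=1}^N ∫_{X^N} (∏_{i=1}^N q(xⁱ)) · (w(x^k)/∑_{j=1}^N w(x^j)) · (Ẑ(x)/Z̄_k(x)) dμ^{⊗N}(x) = Z · ∑_{k=1}^N ∫_{X^N} (π(x^k)/N) · (∏_{i=1, i≠k}^N q(xⁱ)) · (1/Z̄_k(x)) dμ^{⊗N}(x) holds; that is, the average ERS acceptance probability E_{q̄}[Ẑ/Z̄] equals Z · E_{π̃}[1/Z̄]. -/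
open MeasureTheory Finset

noncomputable section

/-- The average ERS acceptance probability `E_q̄[Ẑ/Z̄]` equals
`Z ⬝ E_π̃[1/Z̄]`, where `π̃` has density `(π(x^k)/N) ∏_{i≠k} q(xⁱ)`. -/
theorem ers_static_acceptance_identity
    {X : Type*} [MeasurableSpace X] (μ : Measure X) [SigmaFinite μ]
    (γ q : X → ℝ) (hγm : Measurable γ) (hqm : Measurable q)
    (hγnn : ∀ x, 0 ≤ γ x) (hqnn : ∀ x, 0 ≤ q x)
    (hqprob : ∫ x, q x ∂μ = 1)
    (hnull : μ {x | 0 < γ x ∧ q x = 0} = 0)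
    (Z : ℝ) (hZ : Z = ∫ x, γ x ∂μ) (hZpos : 0 < Z) (hγint : Integrable γ μ)
    (w : X → ℝ) (hw : ∀ x, w x = γ x / q x)
    (wbar : ℝ) (hwbound : ∀ᵐ x ∂μ, 0 < q x → 0 < w x ∧ w x ≤ wbar)
    (N : ℕ) (hN : 1 ≤ N) :
    ∑ k : Fin N, ∫ x : Fin N → X,
        (∏ i, q (x i)) * (w (x k) / ∑ j, w (x j)) *
          (ersZhat N w x / ersZbar N w wbar k x)
        ∂(Measure.pi fun _ : Fin N => μ)
    = Z * ∑ k : Fin N, ∫ x : Fin N → X,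
        ((γ (x k) / Z) / (N : ℝ)) * (∏ i ∈ Finset.univ.erase k, q (x i)) *
          (ersZbar N w wbar k x)⁻¹
        ∂(Measure.pi fun _ : Fin N => μ) := by
  have hZne : Z ≠ 0 := ne_of_gt hZpos
  have hwnn : ∀ y, 0 ≤ w y := fun y => (hw y) ▸ div_nonneg (hγnn y) (hqnn y)
  -- a.e. `q * w = γ`
  have hae : ∀ᵐ y ∂μ, q y * w y = γ y := by
    rw [ae_iff]
    refine measure_mono_null (fun y hy => ?_) hnull
    simp only [Set.mem_setOf_eq] at hy ⊢
    by_cases hq : q y = 0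
    · refine ⟨lt_of_le_of_ne (hγnn y) fun h => hy ?_, hq⟩
      rw [hq, zero_mul, ← h]
    · exact absurd (by rw [hw, mul_div_cancel₀ _ hq]) hy
  rw [Finset.mul_sum]
  refine Finset.sum_congr rfl fun k _ => ?_
  rw [← integral_const_mul]
  have haek : ∀ᵐ x : Fin N → X ∂(Measure.pi fun _ : Fin N => μ),
      q (x k) * w (x k) = γ (x k) :=
    (Measure.tendsto_eval_ae_ae (μ := fun _ : Fin N => μ) (i := k)).eventually hae
  refine integral_congr_ae ?_
  filter_upwards [haek] with x hx
  have hP : ∏ i, q (x i) = q (x k) * ∏ i ∈ Finset.univ.erase k, q (x i) :=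
    (Finset.mul_prod_erase Finset.univ _ (Finset.mem_univ k)).symm
  simp only [ersZhat]
  rw [hP, ← hx]
  rcases eq_or_ne (∑ j, w (x j)) 0 with hs | hs
  · have ha : w (x k) = 0 :=
      (Finset.sum_eq_zero_iff_of_nonneg fun i _ => hwnn (x i)).mp hs k (Finset.mem_univ k)
    simp [ha]
  · have key : (∑ j, w (x j))⁻¹ * (∑ j, w (x j)) = 1 := inv_mul_cancel₀ hs
    have keyZ : Z⁻¹ * Z = 1 := inv_mul_cancel₀ hZne
    linear_combination (q (x k) * w (x k) * (N : ℝ)⁻¹ *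
      (∏ i ∈ Finset.univ.erase k, q (x i)) * (ersZbar N w wbar k x)⁻¹) * (key - keyZ)
end
end

section
/- The ensemble estimator Ẑ is unbiased: ∫_{X^{T×N}} (∏_{t=1}^T ∏_{i=1}^N q_t(x_tⁱ)) · Ẑ(x) dμ^{⊗TN}(x) = Z. -/
open MeasureTheory Finset

noncomputable section

/- We index time by `Fin (T + 1)`, i.e. the state sequence has length `T + 1 ≥ 1`;
the paper's incremental weights `w_t`, `t = 2, …, T`, become `wt t`, `t : Fin T`. -/

/-- Path weight `w(x_{1:T}) = w₁(x₁) ∏_{t=2}^T w_t(x_{t-1}, x_t)`. -/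
def pathW {X : Type*} (T : ℕ) (w1 : X → ℝ) (wt : Fin T → X → X → ℝ)
    (z : Fin (T + 1) → X) : ℝ :=
  w1 (z 0) * ∏ t : Fin T, wt t (z t.castSucc) (z t.succ)

/-- The ensemble estimate `Ẑ(x) = N^{-T} ∑_{i_{1:T} ∈ [N]^T} w(x^{i_{1:T}})`. -/
def dZhat {X : Type*} (T N : ℕ) (w1 : X → ℝ) (wt : Fin T → X → X → ℝ)
    (x : Fin (T + 1) → Fin N → X) : ℝ :=
  ((N : ℝ) ^ (T + 1))⁻¹ * ∑ i : Fin (T + 1) → Fin N, pathW T w1 wt (fun t => x t (i t))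

/-- Auxiliary: lintegral of a product of one-coordinate functions over a finite product measure. -/
lemma lintegral_pi_prod_aux {n : ℕ} {X : Type*} [MeasurableSpace X] (μ : Fin n → Measure X)
    [∀ i, SigmaFinite (μ i)] (f : Fin n → X → ENNReal) (hf : ∀ i, Measurable (f i)) :
    ∫⁻ x : Fin n → X, ∏ i, f i (x i) ∂Measure.pi μ = ∏ i, ∫⁻ y, f i y ∂μ i := by
  induction n with
  | zero => simp [lintegral_const, Measure.pi_univ]
  | succ n ih =>
      have hmp := (measurePreserving_piFinSuccAbove μ 0).symm
      calc ∫⁻ x : Fin (n + 1) → X, ∏ i, f i (x i) ∂Measure.pi μ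
          = ∫⁻ p : X × (Fin n → X),
              f 0 p.1 * ∏ j : Fin n, f j.succ (p.2 j)
              ∂((μ 0).prod (Measure.pi fun j => μ (Fin.succAbove 0 j))) := by
            rw [MeasurePreserving.lintegral_map_equiv
              (fun x : Fin (n + 1) → X => ∏ i, f i (x i)) _ hmp]
            refine lintegral_congr fun p => ?_
            simp only [MeasurableEquiv.piFinSuccAbove_symm_apply, Fin.insertNthEquiv,
              Fin.insertNth_zero, Equiv.coe_fn_mk]
            rw [Fin.prod_univ_succ]
            simp [Fin.zero_succAbove]
        _ = (∫⁻ y, f 0 y ∂μ 0) *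
              ∫⁻ v : Fin n → X, ∏ j : Fin n, f j.succ (v j)
              ∂(Measure.pi fun j => μ (Fin.succAbove 0 j)) := by
            exact lintegral_prod_mul (hf 0).aemeasurable
              (Finset.measurable_prod _ fun (j : Fin n) _ =>
                ((hf j.succ).comp (measurable_pi_apply j))).aemeasurable
        _ = ∏ i, ∫⁻ y, f i y ∂μ i := by
            rw [ih (fun j => μ (Fin.succAbove 0 j)) (fun j => f j.succ) (fun j => hf j.succ),
              Fin.prod_univ_succ]
            simp [Fin.zero_succAbove]

/-- Auxiliary: a finite product of measures with densities is the product measure with the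
product density. -/
lemma pi_withDensity_aux {n : ℕ} {X : Type*} [MeasurableSpace X] (μ : Measure X) [SigmaFinite μ]
    (f : Fin n → X → ENNReal) (hf : ∀ i, Measurable (f i))
    [∀ i, SigmaFinite (μ.withDensity (f i))] :
    Measure.pi (fun i => μ.withDensity (f i))
      = (Measure.pi fun _ : Fin n => μ).withDensity (fun x => ∏ i, f i (x i)) := by
  classical
  refine Measure.pi_eq fun s hs => ?_
  rw [withDensity_apply _ (MeasurableSet.univ_pi hs), ← lintegral_indicator
    (MeasurableSet.univ_pi hs)]
  have hind : ∀ x : Fin n → X,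
      (Set.univ.pi s).indicator (fun x => ∏ i, f i (x i)) x
        = ∏ i, (s i).indicator (f i) (x i) := by
    intro x
    by_cases hx : x ∈ Set.univ.pi s
    · rw [Set.indicator_of_mem hx]
      exact Finset.prod_congr rfl fun i _ =>
        (Set.indicator_of_mem (hx i (Set.mem_univ i)) _).symm
    · rw [Set.indicator_of_notMem hx]
      obtain ⟨i, hi⟩ : ∃ i, x i ∉ s i := by
        by_contra h
        push_neg at h
        exact hx fun i _ => h i
      exact (Finset.prod_eq_zero (Finset.mem_univ i)
        (by rw [Set.indicator_of_notMem hi])).symm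
  calc ∫⁻ x, (Set.univ.pi s).indicator (fun x => ∏ i, f i (x i)) x
        ∂(Measure.pi fun _ : Fin n => μ)
      = ∫⁻ x, ∏ i, (s i).indicator (f i) (x i) ∂(Measure.pi fun _ : Fin n => μ) :=
        lintegral_congr hind
    _ = ∏ i, ∫⁻ y, (s i).indicator (f i) y ∂μ :=
        lintegral_pi_prod_aux _ _ (fun i => (hf i).indicator (hs i))
    _ = ∏ i, (μ.withDensity (f i)) (s i) := by
        refine Finset.prod_congr rfl fun i _ => ?_
        rw [lintegral_indicator (hs i), withDensity_apply _ (hs i)]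

/-- Auxiliary: evaluation at a coordinate is measure preserving for a product of probability
measures. -/
lemma measurePreserving_eval_aux {ι : Type*} [Fintype ι] [DecidableEq ι] {X : Type*}
    [MeasurableSpace X] (ν : ι → Measure X) [∀ i, IsProbabilityMeasure (ν i)] (j : ι) :
    MeasurePreserving (Function.eval j) (Measure.pi ν) (ν j) := by
  refine ⟨measurable_pi_apply j, ?_⟩
  ext s hs
  rw [Measure.map_apply (measurable_pi_apply j) hs, Set.eval_preimage, Measure.pi_pi]
  rw [Finset.prod_eq_single j (fun i _ hij => by simp [Function.update_of_ne hij])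
    (fun h => absurd (Finset.mem_univ j) h)]
  simp

lemma measurable_pathW {X : Type*} [MeasurableSpace X] (T : ℕ) (w1 : X → ℝ)
    (wt : Fin T → X → X → ℝ) (hw1m : Measurable w1)
    (hwtm : ∀ t, Measurable (Function.uncurry (wt t))) :
    Measurable (pathW T w1 wt) := by
  refine (hw1m.comp (measurable_pi_apply 0)).mul ?_
  refine Finset.measurable_prod _ fun t _ => ?_
  exact (hwtm t).comp (f := fun z : Fin (T + 1) → X => (z t.castSucc, z t.succ))
    ((measurable_pi_apply _).prodMk (measurable_pi_apply _))

/-- The ensemble estimator `Ẑ` is unbiased: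
`∫ (∏ₜ∏ᵢ qₜ(xₜⁱ)) Ẑ(x) dμ^{⊗TN}(x) = Z`. -/
theorem ers_dynamic_Zhat_unbiased
    {X : Type*} [MeasurableSpace X] (μ : Measure X) [SigmaFinite μ]
    (T N : ℕ) (hN : 1 ≤ N)
    (q : Fin (T + 1) → X → ℝ)
    (hqm : ∀ t, Measurable (q t)) (hqpos : ∀ t y, 0 < q t y)
    (hqprob : ∀ t, ∫ y, q t y ∂μ = 1)
    (w1 : X → ℝ) (wt : Fin T → X → X → ℝ)
    (hw1m : Measurable w1) (hwtm : ∀ t, Measurable (Function.uncurry (wt t)))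
    (hw1nn : ∀ y, 0 ≤ w1 y) (hwtnn : ∀ t y y', 0 ≤ wt t y y')
    (Z : ℝ)
    (hZ : Z = ∫ z : Fin (T + 1) → X, pathW T w1 wt z * ∏ t, q t (z t)
        ∂(Measure.pi fun _ : Fin (T + 1) => μ))
    (hZpos : 0 < Z)
    (hγint : Integrable (fun z : Fin (T + 1) → X => pathW T w1 wt z * ∏ t, q t (z t))
        (Measure.pi fun _ : Fin (T + 1) => μ)) :
    ∫ x : Fin (T + 1) → Fin N → X,
        (∏ t, ∏ i, q t (x t i)) * dZhat T N w1 wt x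
        ∂(Measure.pi fun _ : Fin (T + 1) => Measure.pi fun _ : Fin N => μ)
      = Z := by
  classical
  set ν : Fin (T + 1) → Measure X :=
    fun t => μ.withDensity (fun y => ENNReal.ofReal (q t y)) with hν
  have hqi : ∀ t, Integrable (q t) μ := fun t => integrable_of_integral_eq_one (hqprob t)
  have hprob : ∀ t, IsProbabilityMeasure (ν t) := by
    intro t
    constructor
    rw [hν]
    simp only [withDensity_apply _ MeasurableSet.univ, Measure.restrict_univ]
    rw [← ofReal_integral_eq_lintegral_ofReal (hqi t)
      (Filter.Eventually.of_forall fun y => (hqpos t y).le), hqprob t]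
    simp
  haveI := hprob
  haveI hsf : ∀ t, SigmaFinite (ν t) := fun t => inferInstance
  -- identification of product measures with densities
  have hpiν : Measure.pi ν = (Measure.pi fun _ : Fin (T + 1) => μ).withDensity
      (fun z => ∏ t, ENNReal.ofReal (q t (z t))) :=
    pi_withDensity_aux μ _ (fun t => (hqm t).ennreal_ofReal)
  have hpiInner : ∀ t, Measure.pi (fun _ : Fin N => ν t)
      = (Measure.pi fun _ : Fin N => μ).withDensity
          (fun v => ∏ j : Fin N, ENNReal.ofReal (q t (v j))) :=
    fun t => pi_withDensity_aux μ _ (fun _ => (hqm t).ennreal_ofReal)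
  haveI hsfInner : ∀ t, SigmaFinite ((Measure.pi fun _ : Fin N => μ).withDensity
      (fun v => ∏ j : Fin N, ENNReal.ofReal (q t (v j)))) := by
    intro t
    rw [← hpiInner t]
    infer_instance
  have hpiOuter : Measure.pi (fun t => Measure.pi (fun _ : Fin N => ν t))
      = (Measure.pi fun _ : Fin (T + 1) => (Measure.pi fun _ : Fin N => μ)).withDensity
          (fun x => ∏ t, ∏ j : Fin N, ENNReal.ofReal (q t (x t j))) := by
    rw [show (fun t => Measure.pi (fun _ : Fin N => ν t))
        = fun t => (Measure.pi fun _ : Fin N => μ).withDensity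
            (fun v => ∏ j : Fin N, ENNReal.ofReal (q t (v j))) from funext hpiInner]
    exact pi_withDensity_aux _ _ (fun t => Finset.measurable_prod _ fun j _ =>
      ((hqm t).comp (measurable_pi_apply j)).ennreal_ofReal)
  set Λ : Measure (Fin (T + 1) → Fin N → X) :=
    Measure.pi fun t => Measure.pi fun _ : Fin N => ν t with hΛ
  -- step 1: move the density into the measure
  have key : ∫ x : Fin (T + 1) → Fin N → X,
      (∏ t, ∏ i, q t (x t i)) * dZhat T N w1 wt x
      ∂(Measure.pi fun _ : Fin (T + 1) => Measure.pi fun _ : Fin N => μ)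
      = ∫ x, dZhat T N w1 wt x ∂Λ := by
    rw [hpiOuter]
    have hdens : (fun x : Fin (T + 1) → Fin N → X =>
        ((∏ t, ∏ j : Fin N, (q t (x t j)).toNNReal : NNReal) : ENNReal))
        = fun x => ∏ t, ∏ j : Fin N, ENNReal.ofReal (q t (x t j)) := by
      funext x
      push_cast
      rfl
    have hqmx : ∀ (t : Fin (T + 1)) (j : Fin N),
        Measurable fun x : Fin (T + 1) → Fin N → X => q t (x t j) :=
      fun t j => (hqm t).comp ((measurable_pi_apply j).comp (measurable_pi_apply t))
    rw [← hdens, integral_withDensity_eq_integral_smul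
      (f := fun x : Fin (T + 1) → Fin N → X => ∏ t, ∏ j : Fin N, (q t (x t j)).toNNReal)
      (Finset.measurable_prod _ fun t _ => Finset.measurable_prod _ fun j _ =>
        (hqmx t j).real_toNNReal)]
    have hcoe2 : ∀ x : Fin (T + 1) → Fin N → X,
        ((∏ t, ∏ j : Fin N, (q t (x t j)).toNNReal : NNReal) : ℝ)
          = ∏ t, ∏ j : Fin N, q t (x t j) := by
      intro x
      push_cast
      exact Finset.prod_congr rfl fun t _ => Finset.prod_congr rfl fun j _ =>
        Real.coe_toNNReal _ (hqpos t (x t j)).le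
    refine integral_congr_ae (Filter.Eventually.of_forall fun x => ?_)
    simp only [NNReal.smul_def, smul_eq_mul, hcoe2]
  -- path weight facts
  have hpm : Measurable (pathW T w1 wt) := measurable_pathW T w1 wt hw1m hwtm
  have hcoe : ∀ z : Fin (T + 1) → X,
      ((∏ t, (q t (z t)).toNNReal : NNReal) : ℝ) = ∏ t, q t (z t) := by
    intro z
    push_cast
    exact Finset.prod_congr rfl fun t _ => Real.coe_toNNReal _ (hqpos t (z t)).le
  have hdens1 : (fun z : Fin (T + 1) → X =>
      ((∏ t, (q t (z t)).toNNReal : NNReal) : ENNReal))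
      = fun z => ∏ t, ENNReal.ofReal (q t (z t)) := by
    funext z; push_cast; rfl
  have hdens1m : Measurable fun z : Fin (T + 1) → X => ∏ t, (q t (z t)).toNNReal :=
    Finset.measurable_prod _ fun t _ => ((hqm t).comp (measurable_pi_apply t)).real_toNNReal
  have hpν_int : Integrable (pathW T w1 wt) (Measure.pi ν) := by
    rw [hpiν, ← hdens1, integrable_withDensity_iff_integrable_smul hdens1m]
    refine hγint.congr (Filter.Eventually.of_forall fun z => ?_)
    simp only [NNReal.smul_def, smul_eq_mul, hcoe]
    ring
  have hZν : ∫ z, pathW T w1 wt z ∂Measure.pi ν = Z := by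
    rw [hpiν, ← hdens1, integral_withDensity_eq_integral_smul hdens1m, hZ]
    refine integral_congr_ae (Filter.Eventually.of_forall fun z => ?_)
    simp only [NNReal.smul_def, smul_eq_mul, hcoe]
    ring
  -- step 2: per-index computations
  have hΦm : ∀ i : Fin (T + 1) → Fin N,
      Measurable fun (x : Fin (T + 1) → Fin N → X) (t : Fin (T + 1)) => x t (i t) :=
    fun i => measurable_pi_lambda _ fun t =>
      (measurable_pi_apply (i t)).comp (measurable_pi_apply t)
  have hΦmp : ∀ i : Fin (T + 1) → Fin N,
      MeasurePreserving (fun (x : Fin (T + 1) → Fin N → X) (t : Fin (T + 1)) => x t (i t))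
        Λ (Measure.pi ν) :=
    fun i => measurePreserving_pi _ _ (fun t => measurePreserving_eval_aux _ (i t))
  have hint_i : ∀ i : Fin (T + 1) → Fin N,
      Integrable (fun x : Fin (T + 1) → Fin N → X => pathW T w1 wt (fun t => x t (i t))) Λ := by
    intro i
    have h1 : AEStronglyMeasurable (pathW T w1 wt)
        (Measure.map (fun (x : Fin (T + 1) → Fin N → X) (t : Fin (T + 1)) => x t (i t)) Λ) := by
      rw [(hΦmp i).map_eq]; exact hpm.aestronglyMeasurable
    have h2 : Integrable (pathW T w1 wt)
        (Measure.map (fun (x : Fin (T + 1) → Fin N → X) (t : Fin (T + 1)) => x t (i t)) Λ) := by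
      rw [(hΦmp i).map_eq]; exact hpν_int
    exact (integrable_map_measure h1 (hΦm i).aemeasurable).mp h2
  have hval_i : ∀ i : Fin (T + 1) → Fin N,
      ∫ x, pathW T w1 wt (fun t => x t (i t)) ∂Λ = Z := by
    intro i
    rw [← hZν, ← (hΦmp i).map_eq,
      integral_map (hΦm i).aemeasurable (by rw [(hΦmp i).map_eq]; exact hpm.aestronglyMeasurable)]
  -- step 3: assemble
  rw [key]
  unfold dZhat
  rw [integral_const_mul, integral_finset_sum _ (fun i _ => hint_i i)]
  simp only [hval_i]
  rw [Finset.sum_const, Finset.card_univ, Fintype.card_pi]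
  simp only [Fintype.card_fin, Finset.prod_const, Finset.card_univ, Fintype.card_fin,
    nsmul_eq_mul]
  have hNne : ((N : ℝ) ^ (T + 1)) ≠ 0 := by positivity
  push_cast
  field_simp
end
end

section
/- The output of the bounding hidden Markov model recursion dominates the ensemble estimator: for every grid x ∈ X^{T×N} and every selected multi-index k_{1:T} ∈ [N]^T, if w₁(y) ≤ w̄₁ for all y ∈ X, w_t(y,y') ≤ w̄_t for all y,y' ∈ X, w_t(y, y') ≤ w̄_t¹(y) for all y, y' ∈ X, and w_t(y, y') ≤ w̄_t²(y') for all y, y' ∈ X (t = 2,…,T), then Ẑ(x) ≤ Z̄_{k_{1:T}}(x). -/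
open Finset

noncomputable section

/-- The upper bound `Z̄_{k_{1:T}}(x)` built from the modified weights `m₁, m_t`. -/
def dZbar {X : Type*} (T N : ℕ) (w1 : X → ℝ) (wt : Fin T → X → X → ℝ)
    (wbar1 : ℝ) (wbar : Fin T → ℝ) (wbar1f wbar2f : Fin T → X → ℝ)
    (k : Fin (T + 1) → Fin N) (x : Fin (T + 1) → Fin N → X) : ℝ :=
  ((N : ℝ) ^ (T + 1))⁻¹ * ∑ i : Fin (T + 1) → Fin N,
    (if i 0 = k 0 then wbar1 else w1 (x 0 (i 0))) *
    ∏ t : Fin T,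
      if i t.castSucc = k t.castSucc then
        (if i t.succ = k t.succ then wbar t else wbar2f t (x t.succ (i t.succ)))
      else
        (if i t.succ = k t.succ then wbar1f t (x t.castSucc (i t.castSucc))
         else wt t (x t.castSucc (i t.castSucc)) (x t.succ (i t.succ)))

/-- The output of the bounding HMM recursion dominates the ensemble
estimator: `Ẑ(x) ≤ Z̄_{k_{1:T}}(x)`. -/
theorem dZhat_le_dZbar
    {X : Type*} (T N : ℕ) (hN : 1 ≤ N)
    (w1 : X → ℝ) (wt : Fin T → X → X → ℝ)
    (hw1nn : ∀ y, 0 ≤ w1 y) (hwtnn : ∀ t y y', 0 ≤ wt t y y')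
    (wbar1 : ℝ) (wbar : Fin T → ℝ) (wbar1f wbar2f : Fin T → X → ℝ)
    (hwbar1fnn : ∀ t y, 0 ≤ wbar1f t y) (hwbar2fnn : ∀ t y, 0 ≤ wbar2f t y)
    (hw1le : ∀ y, w1 y ≤ wbar1)
    (hwtle : ∀ t y y', wt t y y' ≤ wbar t)
    (hwtle1 : ∀ t y y', wt t y y' ≤ wbar1f t y)
    (hwtle2 : ∀ t y y', wt t y y' ≤ wbar2f t y')
    (x : Fin (T + 1) → Fin N → X) (k : Fin (T + 1) → Fin N) :
    dZhat T N w1 wt x ≤ dZbar T N w1 wt wbar1 wbar wbar1f wbar2f k x := by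
  unfold dZhat dZbar pathW
  apply mul_le_mul_of_nonneg_left _ (by positivity)
  apply Finset.sum_le_sum
  intro i _
  apply mul_le_mul
  · split_ifs with h
    · exact hw1le _
    · exact le_refl _
  · apply Finset.prod_le_prod
    · intros; exact hwtnn _ _ _
    · intro t _
      split_ifs with h1 h2 h2
      · exact hwtle _ _ _
      · exact hwtle2 _ _ _
      · exact hwtle1 _ _ _
      · exact le_refl _
  · exact Finset.prod_nonneg (fun t _ => hwtnn _ _ _)
  · split_ifs with h
    · exact le_trans (hw1nn (x 0 (i 0))) (hw1le _)
    · exact hw1nn _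
end
end

section
/- Crude bound on the expected upper bound Z̄ under the auxiliary target π̃: fix k_{1:T} ∈ [N]^T and assume w₁ ≤ w̄₁ pointwise, w_t ≤ w̄_t pointwise, w̄_t¹ ≤ w̄_t pointwise and w̄_t² ≤ w̄_t pointwise for t = 2,…,T. Then ∫ Z̄_{k_{1:T}}(x) dπ̃_{k_{1:T}}(x) ≤ (1 − 1/N)^T · Z + (1 − (1 − 1/N)^T) · ∏_{t=1}^T w̄_t. -/
open MeasureTheory Finset

noncomputable section

/-- Density of the auxiliary target `π̃_{k_{1:T}}` on the grid with respect to
`μ^{⊗TN}`: the selected path has density `π = γ/Z` and the remaining coordinates are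
independent with densities `q_t`. -/
def piTildeDens {X : Type*} (T N : ℕ) (w1 : X → ℝ) (wt : Fin T → X → X → ℝ)
    (q : Fin (T + 1) → X → ℝ) (Z : ℝ)
    (k : Fin (T + 1) → Fin N) (x : Fin (T + 1) → Fin N → X) : ℝ :=
  (pathW T w1 wt (fun t => x t (k t)) * (∏ t, q t (x t (k t))) / Z) *
    ∏ t, ∏ i ∈ Finset.univ.erase (k t), q t (x t i)

namespace CrudeBound

variable {X : Type*} [MeasurableSpace X]

open scoped ENNReal NNReal

lemma lintegral_pi_prod {n : ℕ} {α : Fin n → Type*} [∀ i, MeasurableSpace (α i)]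
    (μ : ∀ i, Measure (α i)) [∀ i, SigmaFinite (μ i)]
    (f : ∀ i, α i → ℝ≥0∞) (hf : ∀ i, Measurable (f i)) :
    ∫⁻ x : ∀ i, α i, ∏ i, f i (x i) ∂Measure.pi μ = ∏ i, ∫⁻ y, f i y ∂μ i := by
  induction n with
  | zero =>
    simp [lintegral_const, Measure.pi_univ]
  | succ n ih =>
    have h := measurePreserving_piFinSuccAbove μ 0
    have hg : Measurable (fun z : α 0 × (∀ j : Fin n, α ((0 : Fin (n+1)).succAbove j)) =>
        f 0 z.1 * ∏ j, f _ (z.2 j)) := by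
      exact ((hf 0).comp measurable_fst).mul <| Finset.measurable_prod _ fun j _ =>
        (hf _).comp ((measurable_pi_apply j).comp measurable_snd)
    have key := h.lintegral_comp hg
    have : ∀ x : ∀ i, α i, (fun z : α 0 × (∀ j : Fin n, α ((0 : Fin (n+1)).succAbove j)) =>
        f 0 z.1 * ∏ j, f _ (z.2 j)) (MeasurableEquiv.piFinSuccAbove α 0 x)
        = ∏ i, f i (x i) := by
      intro x
      simp only [MeasurableEquiv.piFinSuccAbove_apply]
      rw [Fin.prod_univ_succ]
      simp [Fin.zero_succAbove, Fin.tail]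
      rfl
    have key2 : ∫⁻ b : α 0 × (∀ j : Fin n, α (Fin.succAbove 0 j)),
        f 0 b.1 * ∏ j : Fin n, f (Fin.succAbove 0 j) (b.2 j)
          ∂(μ 0).prod (Measure.pi fun j => μ (Fin.succAbove 0 j)) =
        (∫⁻ y, f 0 y ∂μ 0) * ∏ j : Fin n, ∫⁻ y, f (Fin.succAbove 0 j) y ∂μ (Fin.succAbove 0 j) := by
      rw [← ih (fun j => μ (Fin.succAbove 0 j)) (fun j => f (Fin.succAbove 0 j)) (fun j => hf _)]
      exact lintegral_prod_mul (f := f 0)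
        (g := fun y : ∀ j : Fin n, α (Fin.succAbove 0 j) => ∏ j : Fin n, f (Fin.succAbove 0 j) (y j)) ((hf 0).aemeasurable)
        ((Finset.measurable_prod _ fun j _ => (hf _).comp (measurable_pi_apply j)).aemeasurable)
    rw [← lintegral_congr this, key, key2, Fin.prod_univ_succ]
    simp [Fin.zero_succAbove]
    rfl

lemma pi_withDensity {n : ℕ} {α : Fin n → Type*} [∀ i, MeasurableSpace (α i)]
    (μ : ∀ i, Measure (α i)) [∀ i, SigmaFinite (μ i)]
    (f : ∀ i, α i → ℝ≥0∞) (hf : ∀ i, Measurable (f i))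
    [∀ i, SigmaFinite ((μ i).withDensity (f i))] :
    Measure.pi (fun i => (μ i).withDensity (f i)) =
      (Measure.pi μ).withDensity (fun x => ∏ i, f i (x i)) := by
  refine Measure.pi_eq fun s hs => ?_
  rw [withDensity_apply _ (MeasurableSet.univ_pi hs),
    ← lintegral_indicator (MeasurableSet.univ_pi hs)]
  have hpt : ∀ x, (Set.univ.pi s).indicator (fun x => ∏ i, f i (x i)) x
      = ∏ i, (s i).indicator (f i) (x i) := by
    intro x
    by_cases hx : x ∈ Set.univ.pi s
    · rw [Set.indicator_of_mem hx]
      exact Finset.prod_congr rfl fun i _ =>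
        (Set.indicator_of_mem (hx i trivial) _).symm
    · rw [Set.indicator_of_notMem hx]
      rw [Set.mem_univ_pi] at hx
      push_neg at hx
      obtain ⟨i, hi⟩ := hx
      exact (Finset.prod_eq_zero (Finset.mem_univ i)
        (Set.indicator_of_notMem hi _)).symm
  rw [lintegral_congr hpt, lintegral_pi_prod μ _ (fun i => (hf i).indicator (hs i))]
  exact Finset.prod_congr rfl fun i _ => by
    rw [lintegral_indicator (hs i), withDensity_apply _ (hs i)]

lemma measurePreserving_eval_fin {N : ℕ} (κ : Measure X) [IsProbabilityMeasure κ]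
    (a : Fin N) :
    MeasurePreserving (fun y : Fin N → X => y a)
      (Measure.pi fun _ : Fin N => κ) κ := by
  refine ⟨measurable_pi_apply a, ?_⟩
  ext s hs
  rw [Measure.map_apply (measurable_pi_apply a) hs]
  classical
  have : (fun y : Fin N → X => y a) ⁻¹' s
      = Set.univ.pi (fun j => if j = a then s else Set.univ) := by
    ext y
    simp only [Set.mem_preimage, Set.mem_univ_pi]
    constructor
    · intro h j; by_cases hj : j = a <;> simp [hj, h]
    · intro h; simpa using h a
  rw [this, Measure.pi_pi]
  rw [Finset.prod_eq_single a (fun j _ hj => by simp [hj]) (by simp)]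
  simp

lemma measurePreserving_pair_eval_fin {N : ℕ} (κ : Measure X) [IsProbabilityMeasure κ]
    (a b : Fin N) (hab : a ≠ b) :
    MeasurePreserving (fun y : Fin N → X => (y a, y b))
      (Measure.pi fun _ : Fin N => κ) (κ.prod κ) := by
  classical
  have hm : Measurable fun y : Fin N → X => (y a, y b) :=
    (measurable_pi_apply a).prodMk (measurable_pi_apply b)
  refine ⟨hm, ?_⟩
  refine (Measure.prod_eq fun s t hs ht => ?_).symm
  rw [Measure.map_apply hm (hs.prod ht)]
  have : (fun y : Fin N → X => (y a, y b)) ⁻¹' (s ×ˢ t)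
      = Set.univ.pi (fun j => if j = a then s else if j = b then t else Set.univ) := by
    ext y
    simp only [Set.mem_preimage, Set.mem_prod, Set.mem_univ_pi]
    constructor
    · intro h j
      by_cases hj : j = a
      · simp [hj, h.1]
      · by_cases hj' : j = b <;> simp [hj, hj', Ne.symm hab, h.2]
    · intro h
      constructor
      · simpa using h a
      · have := h b
        simpa [Ne.symm hab] using this
  rw [this, Measure.pi_pi]
  have hsub : ({a, b} : Finset (Fin N)) ⊆ Finset.univ := Finset.subset_univ _
  rw [← Finset.prod_subset hsub (fun j _ hj => ?_)]
  · rw [Finset.prod_pair hab]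
    simp [hab, Ne.symm hab]
  · simp only [Finset.mem_insert, Finset.mem_singleton] at hj
    push_neg at hj
    simp [hj.1, hj.2]

lemma integral_comp_mp {α β : Type*} [MeasurableSpace α] [MeasurableSpace β]
    {μ : Measure α} {ν : Measure β} {φ : α → β} (h : MeasurePreserving φ μ ν)
    {g : β → ℝ} (hg : AEStronglyMeasurable g ν) :
    ∫ a, g (φ a) ∂μ = ∫ b, g b ∂ν := by
  rw [← h.map_eq] at hg
  rw [← integral_map h.measurable.aemeasurable hg, h.map_eq]

lemma integrable_comp_mp {α β : Type*} [MeasurableSpace α] [MeasurableSpace β]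
    {μ : Measure α} {ν : Measure β} {φ : α → β} (h : MeasurePreserving φ μ ν)
    {g : β → ℝ} (hg : AEStronglyMeasurable g ν) :
    Integrable (fun a => g (φ a)) μ ↔ Integrable g ν := by
  rw [← h.map_eq] at hg ⊢
  exact (integrable_map_measure hg h.measurable.aemeasurable).symm

end CrudeBound
open scoped ENNReal NNReal in
open CrudeBound in
/-- Crude bound on the expected upper bound `Z̄` under `π̃`:
`E_π̃[Z̄] ≤ (1 - 1/N)ᵀ Z + (1 - (1 - 1/N)ᵀ) ∏ₜ w̄ₜ`. -/
theorem expected_dZbar_crude_bound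
    {X : Type*} [MeasurableSpace X] (μ : Measure X) [SigmaFinite μ]
    (T N : ℕ) (hN : 1 ≤ N)
    (q : Fin (T + 1) → X → ℝ)
    (hqm : ∀ t, Measurable (q t)) (hqpos : ∀ t y, 0 < q t y)
    (hqprob : ∀ t, ∫ y, q t y ∂μ = 1)
    (w1 : X → ℝ) (wt : Fin T → X → X → ℝ)
    (hw1m : Measurable w1) (hwtm : ∀ t, Measurable (Function.uncurry (wt t)))
    (hw1nn : ∀ y, 0 ≤ w1 y) (hwtnn : ∀ t y y', 0 ≤ wt t y y')
    (Z : ℝ)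
    (hZ : Z = ∫ z : Fin (T + 1) → X, pathW T w1 wt z * ∏ t, q t (z t)
        ∂(Measure.pi fun _ : Fin (T + 1) => μ))
    (hZpos : 0 < Z)
    (hγint : Integrable (fun z : Fin (T + 1) → X => pathW T w1 wt z * ∏ t, q t (z t))
        (Measure.pi fun _ : Fin (T + 1) => μ))
    (wbar1 : ℝ) (wbar : Fin T → ℝ) (wbar1f wbar2f : Fin T → X → ℝ)
    (hwbar1fnn : ∀ t y, 0 ≤ wbar1f t y) (hwbar2fnn : ∀ t y, 0 ≤ wbar2f t y)
    (hw1le : ∀ y, w1 y ≤ wbar1)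
    (hwtle : ∀ t y y', wt t y y' ≤ wbar t)
    (hwbar1fle : ∀ t y, wbar1f t y ≤ wbar t)
    (hwbar2fle : ∀ t y, wbar2f t y ≤ wbar t)
    (k : Fin (T + 1) → Fin N) :
    ∫ x : Fin (T + 1) → Fin N → X,
        dZbar T N w1 wt wbar1 wbar wbar1f wbar2f k x *
          piTildeDens T N w1 wt q Z k x
        ∂(Measure.pi fun _ : Fin (T + 1) => Measure.pi fun _ : Fin N => μ)
      ≤ (1 - 1 / (N : ℝ)) ^ (T + 1) * Z +
        (1 - (1 - 1 / (N : ℝ)) ^ (T + 1)) * (wbar1 * ∏ t, wbar t) := by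
  classical
  -- X is nonempty
  have hXne : Nonempty X := by
    by_contra h
    rw [not_nonempty_iff] at h
    haveI hE : IsEmpty (Fin (T + 1) → X) := ⟨fun f => h.false (f 0)⟩
    rw [hZ, integral_of_isEmpty] at hZpos
    exact lt_irrefl 0 hZpos
  obtain ⟨y0⟩ := hXne
  have hwbar1nn : 0 ≤ wbar1 := le_trans (hw1nn y0) (hw1le y0)
  have hwbarnn : ∀ t, 0 ≤ wbar t := fun t => le_trans (hwtnn t y0 y0) (hwtle t y0 y0)
  have hWm : Measurable (pathW T w1 wt) := by
    unfold pathW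
    refine (hw1m.comp (measurable_pi_apply 0)).mul <|
      Finset.measurable_prod _ fun t _ => ?_
    have : Measurable fun z : Fin (T + 1) → X =>
        Function.uncurry (wt t) (z t.castSucc, z t.succ) :=
      (hwtm t).comp ((measurable_pi_apply t.castSucc).prodMk (measurable_pi_apply t.succ))
    exact this
  have hWnn : ∀ z, 0 ≤ pathW T w1 wt z := fun z =>
    mul_nonneg (hw1nn _) (Finset.prod_nonneg fun t _ => hwtnn t _ _)
  -- probability densities
  have hqint : ∀ t, Integrable (q t) μ := by
    intro t; by_contra h
    have h1 := hqprob t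
    rw [integral_undef h] at h1
    exact one_ne_zero h1.symm
  set nq : Fin (T + 1) → X → ℝ≥0 := fun t y => (q t y).toNNReal with hnqdef
  have hnqm : ∀ t, Measurable (nq t) := fun t => (hqm t).real_toNNReal
  have hnqcoe : ∀ t y, ((nq t y : ℝ≥0) : ℝ) = q t y := fun t y =>
    Real.coe_toNNReal _ (hqpos t y).le
  set ρ : Fin (T + 1) → Measure X := fun t => μ.withDensity fun y => ((nq t y : ℝ≥0) : ℝ≥0∞)
    with hρdef
  have hρprob : ∀ t, IsProbabilityMeasure (ρ t) := by
    intro t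
    constructor
    show (μ.withDensity fun y => ((nq t y : ℝ≥0) : ℝ≥0∞)) Set.univ = 1
    rw [withDensity_apply _ MeasurableSet.univ, setLIntegral_univ]
    have hcongr : ∀ y, ((nq t y : ℝ≥0) : ℝ≥0∞) = ENNReal.ofReal (q t y) := fun y => rfl
    rw [lintegral_congr hcongr, ← ofReal_integral_eq_lintegral_ofReal (hqint t)
      (Filter.Eventually.of_forall fun y => (hqpos t y).le), hqprob t, ENNReal.ofReal_one]
  haveI hρsf : ∀ t, SigmaFinite (ρ t) := fun t => by
    haveI := hρprob t; infer_instance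
  set ν : Measure (Fin (T + 1) → Fin N → X) :=
    (Measure.pi fun _ : Fin (T + 1) => Measure.pi fun _ : Fin N => μ) with hνdef
  set QQ : Measure (Fin (T + 1) → Fin N → X) :=
    Measure.pi (fun t => Measure.pi fun _ : Fin N => ρ t) with hQQdef
  haveI hQin : ∀ t, IsProbabilityMeasure (Measure.pi fun _ : Fin N => ρ t) := fun t => by
    haveI := hρprob t; infer_instance
  -- inner and outer withDensity identities
  have hinner : ∀ t, (Measure.pi fun _ : Fin N => ρ t)
      = (Measure.pi fun _ : Fin N => μ).withDensity
          (fun y : Fin N → X => ((∏ j, nq t (y j) : ℝ≥0) : ℝ≥0∞)) := by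
    intro t
    have h1 := pi_withDensity (n := N) (fun _ : Fin N => μ)
      (fun _ y => ((nq t y : ℝ≥0) : ℝ≥0∞)) (fun _ => (hnqm t).coe_nnreal_ennreal)
    refine Eq.trans (b := (Measure.pi fun _ : Fin N => μ).withDensity
      (fun y : Fin N → X => ∏ j, ((nq t (y j) : ℝ≥0) : ℝ≥0∞))) h1 ?_
    congr 1
    funext y
    push_cast
    rfl
  have hDnnm : Measurable (fun x : Fin (T + 1) → Fin N → X => ∏ t, ∏ j, nq t (x t j)) :=
    Finset.measurable_prod _ fun t _ => Finset.measurable_prod _ fun j _ =>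
      (hnqm t).comp ((measurable_pi_apply j).comp (measurable_pi_apply t))
  have houter : QQ = ν.withDensity
      (fun x => ((∏ t, ∏ j, nq t (x t j) : ℝ≥0) : ℝ≥0∞)) := by
    haveI hsf2 : ∀ t, SigmaFinite ((Measure.pi fun _ : Fin N => μ).withDensity
        (fun y : Fin N → X => ((∏ j, nq t (y j) : ℝ≥0) : ℝ≥0∞))) := fun t => by
      rw [← hinner t]; haveI := hQin t; infer_instance
    have h1 := pi_withDensity (n := T + 1) (fun _ : Fin (T + 1) => Measure.pi fun _ : Fin N => μ)
      (fun t (y : Fin N → X) => ((∏ j, nq t (y j) : ℝ≥0) : ℝ≥0∞))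
      (fun t => (Finset.measurable_prod _ fun j _ =>
        (hnqm t).comp (measurable_pi_apply j)).coe_nnreal_ennreal)
    show Measure.pi (fun t => Measure.pi fun _ : Fin N => ρ t)
        = (Measure.pi fun _ : Fin (T + 1) => Measure.pi fun _ : Fin N => μ).withDensity
          (fun x => ((∏ t, ∏ j, nq t (x t j) : ℝ≥0) : ℝ≥0∞))
    calc Measure.pi (fun t => Measure.pi fun _ : Fin N => ρ t)
        = Measure.pi (fun t => (Measure.pi fun _ : Fin N => μ).withDensity
            (fun y : Fin N → X => ((∏ j, nq t (y j) : ℝ≥0) : ℝ≥0∞))) := by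
          congr 1; funext t; exact hinner t
      _ = (Measure.pi fun _ : Fin (T + 1) => Measure.pi fun _ : Fin N => μ).withDensity
            (fun x => ∏ t, ((∏ j, nq t (x t j) : ℝ≥0) : ℝ≥0∞)) := h1
      _ = _ := by
          congr 1
          funext x
          push_cast
          rfl
  -- transfer between ν and QQ
  set D : (Fin (T + 1) → Fin N → X) → ℝ := fun x => ∏ t, ∏ j, q t (x t j) with hDdef
  have hDcoe : ∀ x, ((∏ t, ∏ j, nq t (x t j) : ℝ≥0) : ℝ) = D x := by
    intro x; rw [hDdef]; push_cast [hnqcoe]; rfl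
  have htransfer : ∀ g : (Fin (T + 1) → Fin N → X) → ℝ,
      ∫ x, g x ∂QQ = ∫ x, D x * g x ∂ν := by
    intro g
    rw [houter, integral_withDensity_eq_integral_smul hDnnm g]
    exact integral_congr_ae (Filter.Eventually.of_forall fun x => by
      simp only [NNReal.smul_def, hDcoe, smul_eq_mul])
  have hinttransfer : ∀ g : (Fin (T + 1) → Fin N → X) → ℝ,
      Integrable g QQ ↔ Integrable (fun x => D x * g x) ν := by
    intro g
    rw [houter, integrable_withDensity_iff_integrable_smul hDnnm]
    exact integrable_congr (Filter.Eventually.of_forall fun x => by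
      simp only [NNReal.smul_def, hDcoe, smul_eq_mul])
  -- the P-level identity
  have hPm : Measurable (fun z : Fin (T + 1) → X => ∏ t, nq t (z t)) :=
    Finset.measurable_prod _ fun t _ => (hnqm t).comp (measurable_pi_apply t)
  have hP : Measure.pi ρ = (Measure.pi fun _ : Fin (T + 1) => μ).withDensity
      (fun z => ((∏ t, nq t (z t) : ℝ≥0) : ℝ≥0∞)) := by
    have h1 := pi_withDensity (n := T + 1) (fun _ : Fin (T + 1) => μ)
      (fun t y => ((nq t y : ℝ≥0) : ℝ≥0∞)) (fun t => (hnqm t).coe_nnreal_ennreal)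
    refine Eq.trans (b := (Measure.pi fun _ : Fin (T + 1) => μ).withDensity
      (fun z : Fin (T + 1) → X => ∏ t, ((nq t (z t) : ℝ≥0) : ℝ≥0∞))) h1 ?_
    congr 1; funext z; push_cast; rfl
  have hPcoe : ∀ z : Fin (T + 1) → X, ((∏ t, nq t (z t) : ℝ≥0) : ℝ) = ∏ t, q t (z t) := by
    intro z; push_cast [hnqcoe]; rfl
  have hZP : ∫ z, pathW T w1 wt z ∂(Measure.pi ρ) = Z := by
    rw [hP, integral_withDensity_eq_integral_smul hPm, hZ]
    exact integral_congr_ae (Filter.Eventually.of_forall fun z => by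
      simp only [NNReal.smul_def, hPcoe, smul_eq_mul]; ring)
  have hWint : Integrable (pathW T w1 wt) (Measure.pi ρ) := by
    rw [hP, integrable_withDensity_iff_integrable_smul hPm]
    exact hγint.congr (Filter.Eventually.of_forall fun z => by
      simp only [NNReal.smul_def, hPcoe, smul_eq_mul]; ring)
  -- selected-path pushforward
  have hselMP : MeasurePreserving (fun (x : Fin (T + 1) → Fin N → X) (t : Fin (T + 1)) =>
      x t (k t)) QQ (Measure.pi ρ) := by
    rw [hQQdef]
    exact measurePreserving_pi _ _ (fun t =>
      @measurePreserving_eval_fin X _ N (ρ t) (hρprob t) (k t))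
  have hselint : Integrable (fun x : Fin (T + 1) → Fin N → X =>
      pathW T w1 wt (fun t => x t (k t))) QQ :=
    (integrable_comp_mp hselMP hWm.aestronglyMeasurable).2 hWint
  have hselval : ∫ x, pathW T w1 wt (fun t => x t (k t)) ∂QQ = Z := by
    rw [integral_comp_mp hselMP hWm.aestronglyMeasurable, hZP]

  -- pair pushforward for avoiding indices
  have hkey : ∀ i : Fin (T + 1) → Fin N, (∀ t, i t ≠ k t) →
      Integrable (fun x : Fin (T + 1) → Fin N → X =>
        pathW T w1 wt (fun t => x t (k t)) * pathW T w1 wt (fun t => x t (i t))) QQ ∧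
      ∫ x, pathW T w1 wt (fun t => x t (k t)) * pathW T w1 wt (fun t => x t (i t)) ∂QQ
        = Z * Z := by
    intro i hik
    have hpairMP : MeasurePreserving
        (fun (x : Fin (T + 1) → Fin N → X) (t : Fin (T + 1)) => (x t (k t), x t (i t)))
        QQ (Measure.pi fun t => (ρ t).prod (ρ t)) := by
      rw [hQQdef]
      exact measurePreserving_pi _ _ (fun t =>
        @measurePreserving_pair_eval_fin X _ N (ρ t) (hρprob t) (k t) (i t) (Ne.symm (hik t)))
    have hunzip := measurePreserving_arrowProdEquivProdArrow X X (Fin (T + 1)) ρ ρ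
    have hcomp := hunzip.comp hpairMP
    have hgm : AEStronglyMeasurable
        (fun z : (Fin (T + 1) → X) × (Fin (T + 1) → X) =>
          pathW T w1 wt z.1 * pathW T w1 wt z.2)
        ((Measure.pi ρ).prod (Measure.pi ρ)) :=
      ((hWm.comp measurable_fst).mul (hWm.comp measurable_snd)).aestronglyMeasurable
    have heq : (fun x : Fin (T + 1) → Fin N → X =>
        pathW T w1 wt (fun t => x t (k t)) * pathW T w1 wt (fun t => x t (i t)))
        = fun x => (fun z : (Fin (T + 1) → X) × (Fin (T + 1) → X) =>
            pathW T w1 wt z.1 * pathW T w1 wt z.2)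
          ((⇑(MeasurableEquiv.arrowProdEquivProdArrow X X (Fin (T + 1))) ∘
            fun (x : Fin (T + 1) → Fin N → X) (t : Fin (T + 1)) =>
              (x t (k t), x t (i t))) x) := rfl
    constructor
    · rw [heq]
      exact (integrable_comp_mp hcomp hgm).2 (hWint.mul_prod hWint)
    · rw [heq]
      rw [integral_comp_mp hcomp hgm,
        integral_prod_mul (f := pathW T w1 wt) (g := pathW T w1 wt), hZP]
  -- rewriting the density
  set dens := piTildeDens T N w1 wt q Z k with hdensdef
  have hdens_eq : ∀ x, dens x = D x * (pathW T w1 wt (fun t => x t (k t)) / Z) := by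
    intro x
    rw [hdensdef]
    unfold piTildeDens
    have hD : D x = (∏ t, q t (x t (k t))) *
        ∏ t, ∏ j ∈ Finset.univ.erase (k t), q t (x t j) := by
      rw [hDdef]
      simp only
      rw [← Finset.prod_mul_distrib]
      exact Finset.prod_congr rfl fun t _ =>
        (Finset.mul_prod_erase Finset.univ _ (Finset.mem_univ (k t))).symm
    rw [hD]; ring
  have hdensnn : ∀ x, 0 ≤ dens x := by
    intro x
    rw [hdens_eq]
    refine mul_nonneg ?_ (div_nonneg (hWnn _) hZpos.le)
    rw [hDdef]
    exact Finset.prod_nonneg fun t _ => Finset.prod_nonneg fun j _ => (hqpos t _).le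
  have hdensint : Integrable dens ν := by
    have h1 : Integrable (fun x : Fin (T + 1) → Fin N → X =>
        pathW T w1 wt (fun t => x t (k t)) / Z) QQ := hselint.div_const Z
    exact ((hinttransfer _).1 h1).congr
      (Filter.Eventually.of_forall fun x => (hdens_eq x).symm)
  have hdensval : ∫ x, dens x ∂ν = 1 := by
    rw [integral_congr_ae (Filter.Eventually.of_forall hdens_eq), ← htransfer,
      integral_div, hselval, div_self hZpos.ne']
  have hterm : ∀ i : Fin (T + 1) → Fin N, (∀ t, i t ≠ k t) →
      Integrable (fun x => pathW T w1 wt (fun t => x t (i t)) * dens x) ν ∧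
      ∫ x, pathW T w1 wt (fun t => x t (i t)) * dens x ∂ν = Z := by
    intro i hik
    obtain ⟨hint, hval⟩ := hkey i hik
    have heq : ∀ x, D x * (pathW T w1 wt (fun t => x t (k t)) *
        pathW T w1 wt (fun t => x t (i t)) / Z)
        = pathW T w1 wt (fun t => x t (i t)) * dens x := by
      intro x; rw [hdens_eq]; ring
    constructor
    · exact ((hinttransfer _).1 (hint.div_const Z)).congr
        (Filter.Eventually.of_forall heq)
    · rw [← integral_congr_ae (Filter.Eventually.of_forall heq), ← htransfer,
        integral_div, hval]
      field_simp
  -- counting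
  set SA : Finset (Fin (T + 1) → Fin N) := Finset.univ.filter (fun i => ∀ t, i t ≠ k t)
    with hSAdef
  have hSAmem : ∀ i ∈ SA, ∀ t, i t ≠ k t := fun i hi => (Finset.mem_filter.mp hi).2
  have hSAcard : SA.card = (N - 1) ^ (T + 1) := by
    have hthis : SA = Fintype.piFinset (fun t => Finset.univ.erase (k t)) := by
      ext i
      simp [hSAdef, Fintype.mem_piFinset]
    rw [hthis, Fintype.card_piFinset]
    simp [Finset.card_erase_of_mem]
  have hcardU : (Finset.univ : Finset (Fin (T + 1) → Fin N)).card = N ^ (T + 1) := by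
    simp [Finset.card_univ]
  have hNAcard : (Finset.univ.filter (fun i : Fin (T + 1) → Fin N => ¬ ∀ t, i t ≠ k t)).card
      = N ^ (T + 1) - (N - 1) ^ (T + 1) := by
    have h2 : (Finset.univ.filter (fun i : Fin (T + 1) → Fin N => ∀ t, i t ≠ k t)).card
        = (N - 1) ^ (T + 1) := hSAcard
    rw [Finset.filter_not, Finset.card_sdiff_of_subset (Finset.filter_subset _ _), hcardU, h2]
  -- constants
  set CC := wbar1 * ∏ t, wbar t with hCCdef
  set c := ((N : ℝ) ^ (T + 1))⁻¹ with hcdef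
  have hcnn : 0 ≤ c := by rw [hcdef]; positivity
  have hCCnn : 0 ≤ CC := mul_nonneg hwbar1nn (Finset.prod_nonneg fun t _ => hwbarnn t)
  set HC : ℕ := N ^ (T + 1) - (N - 1) ^ (T + 1) with hHCdef
  -- per-path term bounds
  have htermnn : ∀ (x : Fin (T + 1) → Fin N → X) (i : Fin (T + 1) → Fin N),
      0 ≤ (if i 0 = k 0 then wbar1 else w1 (x 0 (i 0))) *
        ∏ t : Fin T,
          (if i t.castSucc = k t.castSucc then
            (if i t.succ = k t.succ then wbar t else wbar2f t (x t.succ (i t.succ)))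
          else
            (if i t.succ = k t.succ then wbar1f t (x t.castSucc (i t.castSucc))
             else wt t (x t.castSucc (i t.castSucc)) (x t.succ (i t.succ)))) := by
    intro x i
    refine mul_nonneg ?_ (Finset.prod_nonneg fun t _ => ?_)
    · split_ifs
      · exact hwbar1nn
      · exact hw1nn _
    · split_ifs
      · exact hwbarnn t
      · exact hwbar2fnn t _
      · exact hwbar1fnn t _
      · exact hwtnn t _ _
  have htermle : ∀ (x : Fin (T + 1) → Fin N → X) (i : Fin (T + 1) → Fin N),
      (if i 0 = k 0 then wbar1 else w1 (x 0 (i 0))) *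
        ∏ t : Fin T,
          (if i t.castSucc = k t.castSucc then
            (if i t.succ = k t.succ then wbar t else wbar2f t (x t.succ (i t.succ)))
          else
            (if i t.succ = k t.succ then wbar1f t (x t.castSucc (i t.castSucc))
             else wt t (x t.castSucc (i t.castSucc)) (x t.succ (i t.succ)))) ≤ CC := by
    intro x i
    rw [hCCdef]
    refine mul_le_mul ?_ ?_ ?_ hwbar1nn
    · split_ifs with h
      · exact le_rfl
      · exact hw1le _
    · refine Finset.prod_le_prod (fun t _ => ?_) (fun t _ => ?_)
      · split_ifs
        · exact hwbarnn t
        · exact hwbar2fnn t _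
        · exact hwbar1fnn t _
        · exact hwtnn t _ _
      · split_ifs
        · exact le_rfl
        · exact hwbar2fle t _
        · exact hwbar1fle t _
        · exact hwtle t _ _
    · exact Finset.prod_nonneg fun t _ => by
        split_ifs
        · exact hwbarnn t
        · exact hwbar2fnn t _
        · exact hwbar1fnn t _
        · exact hwtnn t _ _
  -- dominating function
  set G : (Fin (T + 1) → Fin N → X) → ℝ := fun x =>
    (∑ i ∈ SA, c * (pathW T w1 wt (fun t => x t (i t)) * dens x)) +
      (c * (HC * CC)) * dens x with hGdef
  have hint1 : Integrable (fun x => ∑ i ∈ SA,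
      c * (pathW T w1 wt (fun t => x t (i t)) * dens x)) ν :=
    integrable_finset_sum _ fun i hi => ((hterm i (hSAmem i hi)).1).const_mul c
  have hint2 : Integrable (fun x => (c * (HC * CC)) * dens x) ν := hdensint.const_mul _
  have hGint : Integrable G ν := hint1.add hint2
  have hGval : ∫ x, G x ∂ν = c * (((N - 1) ^ (T + 1) : ℕ) : ℝ) * Z + c * (HC * CC) := by
    have e0 : ∫ x, G x ∂ν = ∫ x, (∑ i ∈ SA,
        c * (pathW T w1 wt (fun t => x t (i t)) * dens x)) ∂ν +
        ∫ x, (c * (HC * CC)) * dens x ∂ν := integral_add hint1 hint2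
    rw [e0, integral_finset_sum _ (fun i hi => ((hterm i (hSAmem i hi)).1).const_mul c)]
    have e1 : ∀ i ∈ SA, ∫ x, c * (pathW T w1 wt (fun t => x t (i t)) * dens x) ∂ν
        = c * Z := by
      intro i hi
      rw [integral_const_mul, (hterm i (hSAmem i hi)).2]
    rw [Finset.sum_congr rfl e1, Finset.sum_const, hSAcard, integral_const_mul, hdensval]
    rw [nsmul_eq_mul]
    ring
  -- pointwise bound
  have hbound : ∀ x, dZbar T N w1 wt wbar1 wbar wbar1f wbar2f k x * dens x ≤ G x := by
    intro x
    have h1 : dZbar T N w1 wt wbar1 wbar wbar1f wbar2f k x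
        ≤ c * ((∑ i ∈ SA, pathW T w1 wt (fun t => x t (i t))) + (HC : ℝ) * CC) := by
      unfold dZbar
      rw [← hcdef]
      refine mul_le_mul_of_nonneg_left ?_ hcnn
      rw [← Finset.sum_filter_add_sum_filter_not Finset.univ (fun i => ∀ t, i t ≠ k t)]
      refine add_le_add (le_of_eq (Finset.sum_congr rfl fun i hi => ?_)) ?_
      · have hik := (Finset.mem_filter.mp hi).2
        rw [if_neg (hik 0)]
        unfold pathW
        congr 1
        refine Finset.prod_congr rfl fun t _ => ?_
        rw [if_neg (hik t.castSucc), if_neg (hik t.succ)]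
      · calc ∑ i ∈ Finset.univ.filter (fun i : Fin (T + 1) → Fin N => ¬ ∀ t, i t ≠ k t),
              (if i 0 = k 0 then wbar1 else w1 (x 0 (i 0))) *
              ∏ t : Fin T,
                (if i t.castSucc = k t.castSucc then
                  (if i t.succ = k t.succ then wbar t else wbar2f t (x t.succ (i t.succ)))
                else
                  (if i t.succ = k t.succ then wbar1f t (x t.castSucc (i t.castSucc))
                   else wt t (x t.castSucc (i t.castSucc)) (x t.succ (i t.succ))))
            ≤ (Finset.univ.filter
                (fun i : Fin (T + 1) → Fin N => ¬ ∀ t, i t ≠ k t)).card • CC :=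
              Finset.sum_le_card_nsmul _ _ _ (fun i _ => htermle x i)
          _ = ((Finset.univ.filter
                (fun i : Fin (T + 1) → Fin N => ¬ ∀ t, i t ≠ k t)).card : ℝ) * CC :=
              nsmul_eq_mul _ _
          _ = (HC : ℝ) * CC := by rw [hNAcard]
    calc dZbar T N w1 wt wbar1 wbar wbar1f wbar2f k x * dens x
        ≤ (c * ((∑ i ∈ SA, pathW T w1 wt (fun t => x t (i t))) + (HC : ℝ) * CC)) * dens x :=
          mul_le_mul_of_nonneg_right h1 (hdensnn x)
      _ = G x := by
          have e1 : ∑ i ∈ SA, c * (pathW T w1 wt (fun t => x t (i t)) * dens x)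
              = (c * ∑ i ∈ SA, pathW T w1 wt (fun t => x t (i t))) * dens x := by
            rw [Finset.mul_sum, Finset.sum_mul]
            exact Finset.sum_congr rfl fun i _ => by ring
          show (c * ((∑ i ∈ SA, pathW T w1 wt (fun t => x t (i t))) + (HC : ℝ) * CC)) * dens x
            = (∑ i ∈ SA, c * (pathW T w1 wt (fun t => x t (i t)) * dens x)) +
              (c * ((HC : ℝ) * CC)) * dens x
          rw [e1]; ring
  have h0 : 0 ≤ᵐ[ν] fun x => dZbar T N w1 wt wbar1 wbar wbar1f wbar2f k x * dens x := by
    refine Filter.Eventually.of_forall fun x => mul_nonneg ?_ (hdensnn x)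
    unfold dZbar
    rw [← hcdef]
    exact mul_nonneg hcnn (Finset.sum_nonneg fun i _ => htermnn x i)
  -- conclusion
  have hfinal : ∫ x, dZbar T N w1 wt wbar1 wbar wbar1f wbar2f k x * dens x ∂ν
      ≤ c * (((N - 1) ^ (T + 1) : ℕ) : ℝ) * Z + c * (HC * CC) := by
    rw [← hGval]
    exact integral_mono_of_nonneg h0 hGint (Filter.Eventually.of_forall hbound)
  refine le_trans hfinal (le_of_eq ?_)
  have haN : (0 : ℝ) < (N : ℝ) := by
    exact_mod_cast Nat.lt_of_lt_of_le Nat.zero_lt_one hN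
  have hc1 : (((N - 1) ^ (T + 1) : ℕ) : ℝ) = ((N : ℝ) - 1) ^ (T + 1) := by
    rw [Nat.cast_pow, Nat.cast_sub hN, Nat.cast_one]
  have hle' : (N - 1) ^ (T + 1) ≤ N ^ (T + 1) := Nat.pow_le_pow_left (Nat.sub_le _ _) _
  have hc2 : ((HC : ℕ) : ℝ) = (N : ℝ) ^ (T + 1) - ((N : ℝ) - 1) ^ (T + 1) := by
    rw [hHCdef, Nat.cast_sub hle', Nat.cast_pow, Nat.cast_pow, Nat.cast_sub hN, Nat.cast_one]
  rw [hcdef, hc1, hc2]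
  have h1a : 1 - 1 / (N : ℝ) = ((N : ℝ) - 1) / (N : ℝ) := by field_simp
  rw [h1a, div_pow]
  have hpow : (0 : ℝ) < (N : ℝ) ^ (T + 1) := by positivity
  field_simp
end
end

section
/- Factorized toy model bound (inequality (18)): suppose the incremental weights are w₁(y) = v(y) and w_t(y, y') = v(y') for t = 2,…,T, where v : X → (0,∞) is measurable with v ≤ w̄₁ pointwise, all proposal densities equal q₁, and 𝒵 := ∫_X v(y) q₁(y) dμ(y) ∈ (0,∞), so that Z = 𝒵^T. With bounding quantities w̄₁ (for m₁ and all m_t(·, k_t) and m_t(k_{t−1}, k_t) replacements, i.e. w̄_t := w̄₁, w̄_t¹ ≡ w̄₁) and w̄_t²(y') := v(y'), the average acceptance probability of dynamic Ensemble Rejection Sampling satisfies p_ERS ≥ (N𝒵)^T / ((N − 1)𝒵 + w̄₁)^T. -/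
open MeasureTheory Finset

noncomputable section

namespace ERSToy
set_option linter.unusedSectionVars false
set_option linter.unusedVariables false

variable {X : Type*} [MeasureSpace X] [SigmaFinite (volume : Measure X)]
  {q1 v : X → ℝ} {wbar1 Zcal : ℝ}

lemma q1_integrable (hq1prob : ∫ y, q1 y = 1) : Integrable q1 := by
  by_contra h
  rw [integral_undef h] at hq1prob
  exact one_ne_zero hq1prob.symm

lemma marked_integrable (hq : Integrable q1) (hvq : Integrable fun z => v z * q1 z)
    {N : ℕ} (s : Finset (Fin N)) :
    Integrable (fun y : Fin N → X => ∏ k, q1 (y k) * (if k ∈ s then v (y k) else 1)) := by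
  apply Integrable.fintype_prod (f := fun k z => q1 z * (if k ∈ s then v z else 1))
  intro k
  by_cases h : k ∈ s
  · simpa [h, mul_comm] using hvq
  · simpa [h] using hq

lemma marked_integral (hq1prob : ∫ y, q1 y = 1) (hZcal : Zcal = ∫ y, v y * q1 y)
    {N : ℕ} (s : Finset (Fin N)) :
    ∫ y : Fin N → X, ∏ k, q1 (y k) * (if k ∈ s then v (y k) else 1) = Zcal ^ s.card := by
  rw [integral_fintype_prod_volume_eq_prod (ι := Fin N) (fun k z => q1 z * (if k ∈ s then v z else 1))]
  have h : ∀ k : Fin N, (∫ z, q1 z * (if k ∈ s then v z else 1)) = if k ∈ s then Zcal else 1 := by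
    intro k
    by_cases h : k ∈ s
    · have : (fun z => q1 z * (if k ∈ s then v z else 1)) = fun z => v z * q1 z := by
        funext z; simp [h, mul_comm]
      rw [this, ← hZcal]; simp [h]
    · simp [h, hq1prob]
  simp only [h]
  rw [Finset.prod_ite_mem, Finset.univ_inter, Finset.prod_const]

lemma core {N : ℕ} (hN : 1 ≤ N)
    (hq1m : Measurable q1) (hq1pos : ∀ y, 0 < q1 y) (hq1prob : ∫ y, q1 y = 1)
    (hvm : Measurable v) (hvpos : ∀ y, 0 < v y) (hvle : ∀ y, v y ≤ wbar1)
    (hZcal : Zcal = ∫ y, v y * q1 y) (hZcalpos : 0 < Zcal)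
    (hvint : Integrable fun z => v z * q1 z) :
    (N : ℝ) * Zcal / (((N : ℝ) - 1) * Zcal + wbar1)
      ≤ ∫ y : Fin N → X, (∏ i, q1 (y i)) * ∑ j, v (y j) / ((∑ i, v (y i)) - v (y j) + wbar1) := by
  have hq : Integrable q1 := q1_integrable hq1prob
  -- wbar1 bounds
  have hZw : Zcal ≤ wbar1 := by
    rw [hZcal]
    calc ∫ y, v y * q1 y ≤ ∫ y, wbar1 * q1 y :=
          integral_mono hvint (hq.const_mul wbar1)
            (fun y => mul_le_mul_of_nonneg_right (hvle y) (hq1pos y).le)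
      _ = wbar1 := by rw [integral_const_mul, hq1prob, mul_one]
  have hw : 0 < wbar1 := lt_of_lt_of_le hZcalpos hZw
  have hNcast : (1 : ℝ) ≤ (N : ℝ) := by exact_mod_cast hN
  set c : ℝ := ((N : ℝ) - 1) * Zcal + wbar1 with hc
  have hcpos : 0 < c := by
    have : 0 ≤ ((N : ℝ) - 1) * Zcal := mul_nonneg (by linarith) hZcalpos.le
    rw [hc]; linarith
  -- basic pointwise facts
  have hSge : ∀ (y : Fin N → X) (j : Fin N), v (y j) ≤ ∑ i, v (y i) := fun y j =>
    Finset.single_le_sum (fun i _ => (hvpos _).le) (Finset.mem_univ j)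
  have hDpos : ∀ (y : Fin N → X) (j : Fin N), 0 < (∑ i, v (y i)) - v (y j) + wbar1 := by
    intro y j; have := hSge y j; linarith
  -- the summand functions
  set G : Fin N → (Fin N → X) → ℝ := fun j y =>
    (∏ i, q1 (y i)) * (v (y j) / ((∑ i, v (y i)) - v (y j) + wbar1)) with hG
  have hPm : Measurable fun y : Fin N → X => ∏ i, q1 (y i) :=
    Finset.measurable_prod _ (fun i _ => hq1m.comp (measurable_pi_apply i))
  have hPnn : ∀ y : Fin N → X, 0 ≤ ∏ i, q1 (y i) := fun y =>
    Finset.prod_nonneg fun i _ => (hq1pos _).le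
  have hPint : Integrable (fun y : Fin N → X => ∏ i, q1 (y i)) :=
    Integrable.fintype_prod (f := fun _ => q1) (fun _ => hq)
  have hGint : ∀ j, Integrable (G j) := by
    intro j
    have hGm : Measurable (G j) := by
      have hmS : Measurable fun y : Fin N → X => ∑ i, v (y i) :=
        Finset.measurable_sum _ (fun i _ => hvm.comp (measurable_pi_apply i))
      have hmvj : Measurable fun y : Fin N → X => v (y j) := hvm.comp (measurable_pi_apply j)
      exact hPm.mul (hmvj.div ((hmS.sub hmvj).add_const wbar1))
    refine hPint.mono' hGm.aestronglyMeasurable (Filter.Eventually.of_forall fun y => ?_)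
    have hfrac : v (y j) / ((∑ i, v (y i)) - v (y j) + wbar1) ≤ 1 := by
      rw [div_le_one (hDpos y j)]
      have h1 := hSge y j; have h2 := hvle (y j); linarith
    have hfracnn : 0 ≤ v (y j) / ((∑ i, v (y i)) - v (y j) + wbar1) :=
      div_nonneg (hvpos _).le (hDpos y j).le
    rw [Real.norm_eq_abs, abs_of_nonneg (mul_nonneg (hPnn y) hfracnn)]
    calc (∏ i, q1 (y i)) * (v (y j) / ((∑ i, v (y i)) - v (y j) + wbar1))
        ≤ (∏ i, q1 (y i)) * 1 := mul_le_mul_of_nonneg_left hfrac (hPnn y)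
      _ = ∏ i, q1 (y i) := mul_one _
  -- the lower (tangent line) functions
  set L : Fin N → (Fin N → X) → ℝ := fun j y =>
    (2 * c - wbar1) / c ^ 2 * (∏ k, q1 (y k) * (if k ∈ ({j} : Finset (Fin N)) then v (y k) else 1))
    - (1 / c ^ 2) * ∑ i ∈ Finset.univ.erase j,
        ∏ k, q1 (y k) * (if k ∈ ({j, i} : Finset (Fin N)) then v (y k) else 1) with hL
  have hLint : ∀ j, Integrable (L j) := fun j =>
    ((marked_integrable hq hvint _).const_mul _).sub
      ((integrable_finset_sum _ fun i _ => marked_integrable hq hvint _).const_mul _)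
  have hLval : ∀ j, ∫ y : Fin N → X, L j y = Zcal / c := by
    intro j
    rw [hL]
    rw [integral_sub ((marked_integrable hq hvint _).const_mul _)
      ((integrable_finset_sum _ fun i _ => marked_integrable hq hvint _).const_mul _),
      integral_const_mul, integral_const_mul,
      integral_finset_sum _ (fun i _ => marked_integrable hq hvint _),
      marked_integral hq1prob hZcal]
    have hsum2 : ∑ i ∈ Finset.univ.erase j,
        (∫ y : Fin N → X, ∏ k, q1 (y k) * (if k ∈ ({j, i} : Finset (Fin N)) then v (y k) else 1))
        = ((N : ℝ) - 1) * Zcal ^ 2 := by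
      have h2 : ∀ i ∈ Finset.univ.erase j,
          (∫ y : Fin N → X, ∏ k, q1 (y k) * (if k ∈ ({j, i} : Finset (Fin N)) then v (y k) else 1))
          = Zcal ^ 2 := by
        intro i hi
        rw [marked_integral hq1prob hZcal]
        congr 1
        rw [Finset.card_insert_of_notMem (by
          simp only [Finset.mem_singleton]
          exact (Finset.ne_of_mem_erase hi).symm), Finset.card_singleton]
      rw [Finset.sum_congr rfl h2, Finset.sum_const, Finset.card_erase_of_mem (Finset.mem_univ j),
        Finset.card_univ, Fintype.card_fin, nsmul_eq_mul, Nat.cast_sub hN, Nat.cast_one]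
    rw [hsum2, Finset.card_singleton, pow_one]
    have key : (2 * c - wbar1) * Zcal - ((N : ℝ) - 1) * Zcal ^ 2 = Zcal * c := by
      rw [hc]; ring
    calc (2 * c - wbar1) / c ^ 2 * Zcal - 1 / c ^ 2 * (((N : ℝ) - 1) * Zcal ^ 2)
        = ((2 * c - wbar1) * Zcal - ((N : ℝ) - 1) * Zcal ^ 2) / c ^ 2 := by ring
      _ = (Zcal * c) / c ^ 2 := by rw [key]
      _ = Zcal / c := by field_simp
  -- pointwise bound L j ≤ G j
  have tangent : ∀ (P a s : ℝ), 0 ≤ P → 0 < a → a ≤ wbar1 → 0 ≤ s →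
      (2 * c - wbar1) / c ^ 2 * (P * a) - 1 / c ^ 2 * (P * (a * s))
        ≤ P * (a / (s + wbar1)) := by
    intro P a s hP ha haw hs
    have hd : 0 < s + wbar1 := by linarith
    have h1 : (2 * c - wbar1) / c ^ 2 * a - 1 / c ^ 2 * (a * s) ≤ a / (s + wbar1) := by
      have he : (2 * c - wbar1) / c ^ 2 * a - 1 / c ^ 2 * (a * s)
          = a * (2 * c - (s + wbar1)) / c ^ 2 := by ring
      rw [he, div_le_div_iff₀ (by positivity) hd]
      nlinarith [mul_nonneg ha.le (sq_nonneg (c - (s + wbar1)))]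
    calc (2 * c - wbar1) / c ^ 2 * (P * a) - 1 / c ^ 2 * (P * (a * s))
        = P * ((2 * c - wbar1) / c ^ 2 * a - 1 / c ^ 2 * (a * s)) := by ring
      _ ≤ P * (a / (s + wbar1)) := mul_le_mul_of_nonneg_left h1 hP
  have hLleG : ∀ j y, L j y ≤ G j y := by
    intro j y
    have hA : (∏ k, q1 (y k) * (if k ∈ ({j} : Finset (Fin N)) then v (y k) else 1))
        = (∏ i, q1 (y i)) * v (y j) := by
      rw [Finset.prod_mul_distrib]
      congr 1
      rw [Finset.prod_ite_mem, Finset.univ_inter, Finset.prod_singleton]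
    have hB : ∀ i ∈ Finset.univ.erase j,
        (∏ k, q1 (y k) * (if k ∈ ({j, i} : Finset (Fin N)) then v (y k) else 1))
        = (∏ i, q1 (y i)) * (v (y j) * v (y i)) := by
      intro i hi
      rw [Finset.prod_mul_distrib]
      congr 1
      rw [Finset.prod_ite_mem, Finset.univ_inter,
        Finset.prod_pair (Ne.symm (Finset.ne_of_mem_erase hi))]
    have herase : ∑ i ∈ Finset.univ.erase j, v (y i) = (∑ i, v (y i)) - v (y j) :=
      Finset.sum_erase_eq_sub (Finset.mem_univ j)
    have hs : 0 ≤ (∑ i, v (y i)) - v (y j) := by have := hSge y j; linarith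
    have e1 : L j y = (2 * c - wbar1) / c ^ 2 * ((∏ i, q1 (y i)) * v (y j))
        - 1 / c ^ 2 * ((∏ i, q1 (y i)) * (v (y j) * ((∑ i, v (y i)) - v (y j)))) := by
      rw [hL]
      simp only
      rw [hA, Finset.sum_congr rfl hB, ← Finset.mul_sum, ← Finset.mul_sum, herase]
    have e2 : G j y = (∏ i, q1 (y i)) * (v (y j) / (((∑ i, v (y i)) - v (y j)) + wbar1)) := rfl
    rw [e1, e2]
    exact tangent _ _ _ (hPnn y) (hvpos _) (hvle _) hs
  have hGge : ∀ j, Zcal / c ≤ ∫ y : Fin N → X, G j y := by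
    intro j
    rw [← hLval j]
    exact integral_mono (hLint j) (hGint j) (fun y => hLleG j y)
  -- assemble
  have hsplit : (fun y : Fin N → X =>
      (∏ i, q1 (y i)) * ∑ j, v (y j) / ((∑ i, v (y i)) - v (y j) + wbar1))
      = fun y => ∑ j, G j y := by
    funext y; rw [Finset.mul_sum]
  rw [hsplit, integral_finset_sum _ (fun j _ => hGint j)]
  calc (N : ℝ) * Zcal / c = ∑ _j : Fin N, Zcal / c := by
        rw [Finset.sum_const, Finset.card_univ, Fintype.card_fin, nsmul_eq_mul]; ring
    _ ≤ ∑ j, ∫ y : Fin N → X, G j y := Finset.sum_le_sum fun j _ => hGge j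


lemma pointwise_simp {X : Type*} (T N : ℕ) (hN : 1 ≤ N)
    (q1 v : X → ℝ) (hvpos : ∀ y, 0 < v y) (wbar1 : ℝ) (hvle : ∀ y, v y ≤ wbar1)
    (hw : 0 < wbar1) (x : Fin (T + 1) → Fin N → X) :
    (∏ t, ∏ i, q1 (x t i)) *
        ∑ k : Fin (T + 1) → Fin N,
          (pathW T v (fun _ _ y' => v y') (fun t => x t (k t)) /
              ∑ i : Fin (T + 1) → Fin N,
                pathW T v (fun _ _ y' => v y') (fun t => x t (i t))) *
            (dZhat T N v (fun _ _ y' => v y') x /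
              dZbar T N v (fun _ _ y' => v y') wbar1 (fun _ => wbar1)
                (fun _ _ => wbar1) (fun _ y' => v y') k x)
      = ∏ t, ((∏ i, q1 (x t i)) *
          ∑ j, v (x t j) / ((∑ i, v (x t i)) - v (x t j) + wbar1)) := by
  haveI : NeZero N := ⟨by omega⟩
  have hpath : ∀ z : Fin (T + 1) → X,
      pathW T v (fun _ _ y' => v y') z = ∏ t, v (z t) := by
    intro z; rw [pathW, Fin.prod_univ_succ]
  have hsum : ∀ f : Fin (T + 1) → Fin N → ℝ,
      ∑ i : Fin (T + 1) → Fin N, ∏ t, f t (i t) = ∏ t, ∑ j, f t j := by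
    intro f
    rw [← Fintype.piFinset_univ, ← Finset.prod_univ_sum]
  have hSpos : ∀ t, 0 < ∑ j, v (x t j) :=
    fun t => Finset.sum_pos (fun i _ => hvpos _) Finset.univ_nonempty
  have hDpos : ∀ t k, 0 < (∑ j, v (x t j)) - v (x t k) + wbar1 := by
    intro t k
    have h1 : v (x t k) ≤ ∑ j, v (x t j) :=
      Finset.single_le_sum (fun i _ => (hvpos _).le) (Finset.mem_univ k)
    linarith
  have hcN : ((N : ℝ) ^ (T + 1))⁻¹ ≠ 0 :=
    inv_ne_zero (pow_ne_zero _ (Nat.cast_ne_zero.mpr (by omega)))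
  have hsumpath : ∑ i : Fin (T + 1) → Fin N,
      pathW T v (fun _ _ y' => v y') (fun t => x t (i t)) = ∏ t, ∑ j, v (x t j) := by
    simp only [hpath]
    exact hsum fun t j => v (x t j)
  have hZhat : dZhat T N v (fun _ _ y' => v y') x
      = ((N : ℝ) ^ (T + 1))⁻¹ * ∏ t, ∑ j, v (x t j) := by
    rw [dZhat, hsumpath]
  have hZbar : ∀ k : Fin (T + 1) → Fin N,
      dZbar T N v (fun _ _ y' => v y') wbar1 (fun _ => wbar1)
        (fun _ _ => wbar1) (fun _ y' => v y') k x
      = ((N : ℝ) ^ (T + 1))⁻¹ * ∏ t, ((∑ j, v (x t j)) - v (x t (k t)) + wbar1) := by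
    intro k
    rw [dZbar]
    congr 1
    have h1 : ∀ i : Fin (T + 1) → Fin N,
        ((if i 0 = k 0 then wbar1 else v (x 0 (i 0))) *
          ∏ t : Fin T,
            if i t.castSucc = k t.castSucc then
              (if i t.succ = k t.succ then wbar1 else v (x t.succ (i t.succ)))
            else
              (if i t.succ = k t.succ then wbar1
               else v (x t.succ (i t.succ))))
        = ∏ t : Fin (T + 1), (if i t = k t then wbar1 else v (x t (i t))) := by
      intro i
      conv_rhs => rw [Fin.prod_univ_succ]
      congr 1
      refine Finset.prod_congr rfl fun t _ => ?_
      by_cases h : i t.castSucc = k t.castSucc <;> simp [h]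
    calc ∑ i : Fin (T + 1) → Fin N,
          ((if i 0 = k 0 then wbar1 else v (x 0 (i 0))) *
          ∏ t : Fin T,
            if i t.castSucc = k t.castSucc then
              (if i t.succ = k t.succ then wbar1 else v (x t.succ (i t.succ)))
            else
              (if i t.succ = k t.succ then wbar1
               else v (x t.succ (i t.succ))))
        = ∑ i : Fin (T + 1) → Fin N, ∏ t : Fin (T + 1),
            (if i t = k t then wbar1 else v (x t (i t))) :=
          Finset.sum_congr rfl fun i _ => h1 i
      _ = ∏ t, ∑ j, (if j = k t then wbar1 else v (x t j)) :=
          hsum fun t j => if j = k t then wbar1 else v (x t j)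
      _ = ∏ t, ((∑ j, v (x t j)) - v (x t (k t)) + wbar1) := by
          refine Finset.prod_congr rfl fun t _ => ?_
          have hj : ∀ j : Fin N, (if j = k t then wbar1 else v (x t j))
              = v (x t j) + (if j = k t then wbar1 - v (x t (k t)) else 0) := by
            intro j
            by_cases h : j = k t
            · subst h; simp
            · simp [h]
          rw [Finset.sum_congr rfl fun j _ => hj j, Finset.sum_add_distrib,
            Finset.sum_ite_eq' Finset.univ (k t) fun _ => wbar1 - v (x t (k t))]
          simp only [Finset.mem_univ, if_true]
          ring
  have hterm : ∀ k : Fin (T + 1) → Fin N,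
      (pathW T v (fun _ _ y' => v y') (fun t => x t (k t)) /
          ∑ i : Fin (T + 1) → Fin N,
            pathW T v (fun _ _ y' => v y') (fun t => x t (i t))) *
        (dZhat T N v (fun _ _ y' => v y') x /
          dZbar T N v (fun _ _ y' => v y') wbar1 (fun _ => wbar1)
            (fun _ _ => wbar1) (fun _ y' => v y') k x)
      = ∏ t, (v (x t (k t)) / ((∑ j, v (x t j)) - v (x t (k t)) + wbar1)) := by
    intro k
    rw [hpath, hsumpath, hZhat, hZbar k, mul_div_mul_left _ _ hcN]
    have hQ : (∏ t, ∑ j, v (x t j)) ≠ 0 :=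
      ne_of_gt (Finset.prod_pos fun t _ => hSpos t)
    rw [div_mul_div_comm, mul_comm (∏ t, v (x t (k t))), mul_div_mul_left _ _ hQ,
      ← Finset.prod_div_distrib]
  rw [Finset.sum_congr rfl fun k _ => hterm k,
    hsum fun t j => v (x t j) / ((∑ i, v (x t i)) - v (x t j) + wbar1),
    ← Finset.prod_mul_distrib]


end ERSToy

/-- Factorized toy model bound (inequality (18) of the paper):
if `w₁ = v`, `w_t(y, y') = v(y')`, all proposals equal `q₁` and
`𝒵 = ∫ v q₁ dμ ∈ (0, ∞)`, then with bounding quantities `w̄₁` (for `m₁`, all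
`m_t(·, k_t)` and `m_t(k_{t-1}, k_t)`) and `w̄_t²(y') = v(y')`, the average acceptance
probability satisfies `p_ERS ≥ (N𝒵)ᵀ / ((N - 1)𝒵 + w̄₁)ᵀ`. -/
theorem ers_dynamic_factorized_toy_model_bound
    {X : Type*} [MeasurableSpace X] (μ : Measure X) [SigmaFinite μ]
    (T N : ℕ) (hN : 1 ≤ N)
    (q1 : X → ℝ) (hq1m : Measurable q1) (hq1pos : ∀ y, 0 < q1 y)
    (hq1prob : ∫ y, q1 y ∂μ = 1)
    (v : X → ℝ) (hvm : Measurable v) (hvpos : ∀ y, 0 < v y)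
    (wbar1 : ℝ) (hvle : ∀ y, v y ≤ wbar1)
    (Zcal : ℝ) (hZcal : Zcal = ∫ y, v y * q1 y ∂μ) (hZcalpos : 0 < Zcal)
    (hvint : Integrable (fun y => v y * q1 y) μ) :
    ∫ x : Fin (T + 1) → Fin N → X,
        (∏ t, ∏ i, q1 (x t i)) *
          ∑ k : Fin (T + 1) → Fin N,
            (pathW T v (fun _ _ y' => v y') (fun t => x t (k t)) /
                ∑ i : Fin (T + 1) → Fin N,
                  pathW T v (fun _ _ y' => v y') (fun t => x t (i t))) *
              (dZhat T N v (fun _ _ y' => v y') x /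
                dZbar T N v (fun _ _ y' => v y') wbar1 (fun _ => wbar1)
                  (fun _ _ => wbar1) (fun _ y' => v y') k x)
        ∂(Measure.pi fun _ : Fin (T + 1) => Measure.pi fun _ : Fin N => μ)
      ≥ ((N : ℝ) * Zcal) ^ (T + 1) / (((N : ℝ) - 1) * Zcal + wbar1) ^ (T + 1) := by
  letI : MeasureSpace X := ⟨μ⟩
  haveI : SigmaFinite (volume : Measure X) := (inferInstance : SigmaFinite μ)
  have hq : Integrable q1 μ := ERSToy.q1_integrable hq1prob
  have hZw : Zcal ≤ wbar1 := by
    rw [hZcal]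
    calc ∫ y, v y * q1 y ∂μ ≤ ∫ y, wbar1 * q1 y ∂μ :=
          integral_mono hvint (hq.const_mul wbar1)
            (fun y => mul_le_mul_of_nonneg_right (hvle y) (hq1pos y).le)
      _ = wbar1 := by rw [integral_const_mul, hq1prob, mul_one]
  have hw : 0 < wbar1 := lt_of_lt_of_le hZcalpos hZw
  have hNcast : (1 : ℝ) ≤ (N : ℝ) := by exact_mod_cast hN
  have hcpos : 0 < ((N : ℝ) - 1) * Zcal + wbar1 := by
    have : 0 ≤ ((N : ℝ) - 1) * Zcal := mul_nonneg (by linarith) hZcalpos.le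
    linarith
  set g : (Fin N → X) → ℝ := fun y =>
    (∏ i, q1 (y i)) * ∑ j, v (y j) / ((∑ i, v (y i)) - v (y j) + wbar1) with hg
  have hrw : (fun x : Fin (T + 1) → Fin N → X =>
      (∏ t, ∏ i, q1 (x t i)) *
          ∑ k : Fin (T + 1) → Fin N,
            (pathW T v (fun _ _ y' => v y') (fun t => x t (k t)) /
                ∑ i : Fin (T + 1) → Fin N,
                  pathW T v (fun _ _ y' => v y') (fun t => x t (i t))) *
              (dZhat T N v (fun _ _ y' => v y') x /
                dZbar T N v (fun _ _ y' => v y') wbar1 (fun _ => wbar1)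
                  (fun _ _ => wbar1) (fun _ y' => v y') k x))
      = fun x => ∏ t, g (x t) :=
    funext fun x => ERSToy.pointwise_simp T N hN q1 v hvpos wbar1 hvle hw x
  have hmeas : (Measure.pi fun _ : Fin (T + 1) => Measure.pi fun _ : Fin N => μ)
      = (volume : Measure (Fin (T + 1) → Fin N → X)) := rfl
  rw [hmeas, hrw]
  have hpow := MeasureTheory.integral_fintype_prod_volume_eq_pow (ι := Fin (T + 1)) g
  simp only [Fintype.card_fin] at hpow
  rw [hpow]
  have hcore : (N : ℝ) * Zcal / (((N : ℝ) - 1) * Zcal + wbar1) ≤ ∫ y, g y :=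
    ERSToy.core hN hq1m hq1pos hq1prob hvm hvpos hvle hZcal hZcalpos hvint
  have hnn : 0 ≤ (N : ℝ) * Zcal / (((N : ℝ) - 1) * Zcal + wbar1) := by positivity
  calc ((N : ℝ) * Zcal) ^ (T + 1) / (((N : ℝ) - 1) * Zcal + wbar1) ^ (T + 1)
      = ((N : ℝ) * Zcal / (((N : ℝ) - 1) * Zcal + wbar1)) ^ (T + 1) := (div_pow _ _ _).symm
    _ ≤ (∫ y, g y) ^ (T + 1) := pow_le_pow_left₀ hnn hcore _
end
end
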